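/- arXiv:2310.03479 — 5 statements merged into one kernel-verified Lean document; each statement's English description precedes it below -/
import Mathlib

section
/- Let $(d_k)_{k\in\mathbb{Z}}$ be an absolutely summable sequence of complex numbers and $D_n = ((d_{i-j}))_{i,j=1}^n$. Then for every positive integer $p$, $\lim_{n\to\infty} \frac{1}{n}\mathrm{Tr}(D_n^p) = \sum_{i_1,\dots,i_p = -\infty}^{\infty} d_{i_1}\cdots d_{i_p}\, \delta_{0, i_1+\cdots+i_p}$, and the right-hand side series converges absolutely. -/
open Matrix Filter

/-- Toeplitz matrix with `(i,j)` entry `d (i - j)`. -/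
def toep (d : ℤ → ℂ) (n : ℕ) : Matrix (Fin n) (Fin n) ℂ :=
  Matrix.of fun i j => d ((i : ℤ) - (j : ℤ))


open Finset

-- summability of products over pi types
lemma summable_pi_prod (g : ℤ → ℝ) (hg : Summable g) (hg0 : ∀ k, 0 ≤ g k) :
    ∀ p : ℕ, Summable (fun i : Fin p → ℤ => ∏ t, g (i t)) := by
  intro p
  induction p with
  | zero =>
      simpa using (summable_of_finite_support (Set.toFinite _) : Summable (fun _ : Fin 0 → ℤ => (1:ℝ)))
  | succ q ih =>
      have h := hg.mul_of_nonneg (ih) hg0 (fun i => Finset.prod_nonneg fun t _ => hg0 _)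
      have := h.comp_injective (Fin.consEquiv (fun _ : Fin (q+1) => ℤ)).symm.injective
      refine this.congr ?_
      intro i
      simp only [Function.comp, Fin.consEquiv, Equiv.coe_fn_symm_mk, Fin.prod_univ_succ]
      rfl

lemma pow_apply_chain {n : ℕ} (M : Matrix (Fin n) (Fin n) ℂ) :
    ∀ (q : ℕ) (a b : Fin n),
      (M ^ (q + 1)) a b =
        ∑ f : Fin q → Fin n,
          ∏ t : Fin (q + 1),
            M ((Fin.cons a (Fin.snoc f b) : Fin (q + 2) → Fin n) t.castSucc)
              ((Fin.cons a (Fin.snoc f b) : Fin (q + 2) → Fin n) t.succ) := by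
  intro q
  induction q with
  | zero =>
      intro a b
      simp [pow_one, Fin.snoc]
  | succ q ih =>
      intro a b
      have hstep : (M ^ (q + 2)) a b = ∑ c, M a c * (M ^ (q + 1)) c b := by
        rw [pow_succ']
        rfl
      rw [hstep]
      have hre := Equiv.sum_comp (Fin.consEquiv (fun _ : Fin (q+1) => Fin n))
        (fun f : Fin (q + 1) → Fin n =>
          ∏ t : Fin (q + 2),
            M ((Fin.cons a (Fin.snoc f b) : Fin (q + 3) → Fin n) t.castSucc)
              ((Fin.cons a (Fin.snoc f b) : Fin (q + 3) → Fin n) t.succ))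
      rw [← hre, Fintype.sum_prod_type]
      refine Finset.sum_congr rfl ?_
      intro c _
      rw [ih c b, Finset.mul_sum]
      refine Finset.sum_congr rfl ?_
      intro f _
      simp only [Fin.consEquiv, Equiv.coe_fn_mk]
      set w : Fin (q + 3) → Fin n := Fin.cons a (Fin.snoc (Fin.cons c f) b) with hw
      set v : Fin (q + 2) → Fin n := Fin.cons c (Fin.snoc f b) with hv
      have hwv : ∀ k : Fin (q + 2), w k.succ = v k := by
        intro k
        rw [hw, Fin.cons_succ, hv, Fin.cons_snoc_eq_snoc_cons]
      rw [Fin.prod_univ_succ (fun t : Fin (q + 2) => M (w t.castSucc) (w t.succ))]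
      have h0 : M (w (0 : Fin (q+2)).castSucc) (w (0 : Fin (q+2)).succ) = M a c := by
        have h1 : w (0 : Fin (q+2)).castSucc = a := by
          simp [hw]
        have h2 : w (0 : Fin (q+2)).succ = c := by
          rw [hwv 0, hv]; simp
        rw [h1, h2]
      rw [h0]
      congr 1
      refine Finset.prod_congr rfl ?_
      intro t _
      rw [← Fin.succ_castSucc, hwv, hwv]

/-- The closed walk determined by a start `a = x.1` and intermediate points `x.2`. -/
def walkFn (q n : ℕ) (x : Fin n × (Fin q → Fin n)) : Fin (q + 2) → Fin n :=
  Fin.cons x.1 (Fin.snoc x.2 x.1)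

/-- The successive differences of the walk. -/
def dvec (q n : ℕ) (x : Fin n × (Fin q → Fin n)) : Fin (q + 1) → ℤ :=
  fun t => ((walkFn q n x t.castSucc : Fin n) : ℤ) - ((walkFn q n x t.succ : Fin n) : ℤ)

/-- Partial sums. -/
def SS (p : ℕ) (i : Fin p → ℤ) (m : ℕ) : ℤ :=
  ∑ s ∈ Finset.range m, if h : s < p then i ⟨s, h⟩ else 0

lemma SS_succ (p : ℕ) (i : Fin p → ℤ) (m : ℕ) (hm : m < p) :
    SS p i (m + 1) = SS p i m + i ⟨m, hm⟩ := by
  rw [SS, Finset.sum_range_succ, dif_pos hm]; rfl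

lemma sum_univ_eq_SS (p : ℕ) (i : Fin p → ℤ) : ∑ t, i t = SS p i p := by
  rw [SS, ← Fin.sum_univ_eq_sum_range (fun s => if h : s < p then i ⟨s, h⟩ else 0) p]
  exact Finset.sum_congr rfl fun t _ => by simp [t.isLt]

lemma abs_SS_le (p : ℕ) (i : Fin p → ℤ) (m : ℕ) : |SS p i m| ≤ ∑ t, |i t| := by
  calc |SS p i m| ≤ ∑ s ∈ Finset.range m, |if h : s < p then i ⟨s, h⟩ else 0| :=
        Finset.abs_sum_le_sum_abs _ _
    _ ≤ ∑ s ∈ Finset.range (max m p), |if h : s < p then i ⟨s, h⟩ else 0| := by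
        apply Finset.sum_le_sum_of_subset_of_nonneg
        · exact Finset.range_subset_range.mpr (le_max_left _ _)
        · intro s _ _; exact abs_nonneg _
    _ = ∑ s ∈ Finset.range p, |if h : s < p then i ⟨s, h⟩ else 0| := by
        apply (Finset.sum_subset (Finset.range_subset_range.mpr (le_max_right _ _)) ?_).symm
        intro s _ hs
        rw [dif_neg (by simpa using hs)]
        simp
    _ = ∑ t, |i t| := by
        rw [← Fin.sum_univ_eq_sum_range (fun s => |if h : s < p then i ⟨s, h⟩ else 0|) p]
        exact Finset.sum_congr rfl fun t _ => by simp [t.isLt]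

lemma walkFn_zero (q n : ℕ) (x : Fin n × (Fin q → Fin n)) :
    walkFn q n x 0 = x.1 := rfl

lemma walkFn_last (q n : ℕ) (x : Fin n × (Fin q → Fin n)) :
    walkFn q n x (Fin.last (q + 1)) = x.1 := by
  rw [walkFn, ← Fin.succ_last, Fin.cons_succ, Fin.snoc_last]

lemma walkFn_mid (q n : ℕ) (x : Fin n × (Fin q → Fin n)) (s : Fin q) :
    walkFn q n x s.succ.castSucc = x.2 s := by
  rw [walkFn, ← Fin.succ_castSucc, Fin.cons_succ, Fin.snoc_castSucc]

lemma walk_val_of_dvec {q n : ℕ} {x : Fin n × (Fin q → Fin n)} {i : Fin (q + 1) → ℤ}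
    (h : dvec q n x = i) :
    ∀ k : Fin (q + 2), ((walkFn q n x k : Fin n) : ℤ) = (x.1 : ℤ) - SS (q + 1) i k := by
  intro k
  induction k using Fin.induction with
  | zero => simp [walkFn_zero, SS]
  | succ k ih =>
      have hk := congrFun h k
      rw [dvec] at hk
      have : ((walkFn q n x k.succ : Fin n) : ℤ)
          = ((walkFn q n x k.castSucc : Fin n) : ℤ) - i k := by omega
      rw [this, ih, Fin.val_succ, Fin.coe_castSucc,
        SS_succ (q + 1) i (k : ℕ) k.isLt, Fin.eta]
      ring

lemma sum_eq_zero_of_dvec {q n : ℕ} {x : Fin n × (Fin q → Fin n)} {i : Fin (q + 1) → ℤ}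
    (h : dvec q n x = i) : ∑ t, i t = 0 := by
  have h1 := walk_val_of_dvec h (Fin.last (q + 1))
  rw [walkFn_last] at h1
  rw [sum_univ_eq_SS]
  have : (Fin.last (q + 1) : ℕ) = q + 1 := rfl
  rw [this] at h1
  omega

lemma dvec_inj {q n : ℕ} {x y : Fin n × (Fin q → Fin n)} {i : Fin (q + 1) → ℤ}
    (hx : dvec q n x = i) (hy : dvec q n y = i) (h1 : x.1 = y.1) : x = y := by
  have hw : ∀ k : Fin (q + 2), walkFn q n x k = walkFn q n y k := by
    intro k
    have := (walk_val_of_dvec hx k).trans (h1 ▸ (walk_val_of_dvec hy k).symm)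
    exact Fin.ext (by exact_mod_cast this)
  refine Prod.ext h1 (funext fun s => ?_)
  have := hw s.succ.castSucc
  rwa [walkFn_mid, walkFn_mid] at this

lemma dvec_construct {q n : ℕ} {i : Fin (q + 1) → ℤ} (hz : ∑ t, i t = 0)
    (a : Fin n) (ha1 : (∑ t, |i t|) ≤ (a : ℤ)) (ha2 : (a : ℤ) + (∑ t, |i t|) < n) :
    ∃ x : Fin n × (Fin q → Fin n), dvec q n x = i ∧ x.1 = a := by
  have hSbd : ∀ m : ℕ, |SS (q + 1) i m| ≤ ∑ t, |i t| := fun m => abs_SS_le _ i m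
  have hbd : ∀ m : ℕ, 0 ≤ (a : ℤ) - SS (q + 1) i m ∧ (a : ℤ) - SS (q + 1) i m < n := by
    intro m
    have h := hSbd m
    rw [abs_le] at h
    omega
  refine ⟨⟨a, fun s => ⟨((a : ℤ) - SS (q + 1) i ((s : ℕ) + 1)).toNat, ?_⟩⟩, ?_, rfl⟩
  · have h := hbd ((s : ℕ) + 1)
    omega
  · set x : Fin n × (Fin q → Fin n) :=
      ⟨a, fun s => ⟨((a : ℤ) - SS (q + 1) i ((s : ℕ) + 1)).toNat, by have := hbd ((s : ℕ) + 1); omega⟩⟩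
      with hx
    have hval : ∀ k : Fin (q + 2), ((walkFn q n x k : Fin n) : ℤ) = (a : ℤ) - SS (q + 1) i k := by
      intro k
      induction k using Fin.cases with
      | zero => simp [walkFn_zero, hx, SS]
      | succ j =>
          induction j using Fin.lastCases with
          | last =>
              rw [Fin.succ_last, walkFn_last]
              have h1 : ((Fin.last (q + 1)) : ℕ) = q + 1 := rfl
              rw [h1, ← sum_univ_eq_SS, hz, sub_zero]
          | cast s =>
              rw [Fin.succ_castSucc, walkFn_mid]
              have h2 : (s.succ.castSucc : ℕ) = (s : ℕ) + 1 := rfl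
              rw [h2]
              have h3 := hbd ((s : ℕ) + 1)
              show ((((a : ℤ) - SS (q + 1) i ((s : ℕ) + 1)).toNat : ℕ) : ℤ) = _
              rw [Int.toNat_of_nonneg h3.1]
    funext t
    rw [dvec, hval t.castSucc, hval t.succ, Fin.coe_castSucc, Fin.val_succ,
      SS_succ (q + 1) i (t : ℕ) t.isLt, Fin.eta]
    ring

lemma trace_toep_pow (d : ℤ → ℂ) (q n : ℕ) :
    Matrix.trace (toep d n ^ (q + 1)) =
      ∑ x : Fin n × (Fin q → Fin n), ∏ t : Fin (q + 1), d (dvec q n x t) := by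
  simp only [Matrix.trace, Matrix.diag]
  rw [Finset.sum_congr rfl fun a _ => pow_apply_chain (toep d n) q a a]
  rw [show (∑ x : Fin n × (Fin q → Fin n), ∏ t : Fin (q + 1), d (dvec q n x t))
      = ∑ a : Fin n, ∑ f : Fin q → Fin n, ∏ t : Fin (q + 1), d (dvec q n (a, f) t) from
    Fintype.sum_prod_type _]
  rfl

/-- For an absolutely summable input sequence `d`,
`(1/n) Tr(Dₙᵖ) → ∑_{i₁,…,i_p ∈ ℤ} d_{i₁}⋯d_{i_p} δ_{0, i₁+⋯+i_p}`, and the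
right-hand series converges absolutely. -/
theorem normalizedTrace_toeplitz_pow_tendsto (d : ℤ → ℂ)
    (hd : Summable fun k : ℤ => ‖d k‖) (p : ℕ) (hp : 0 < p) :
    Summable
        (fun i : Fin p → ℤ =>
          ‖(∏ t, d (i t)) * (if ∑ t, i t = 0 then (1 : ℂ) else 0)‖) ∧
      Tendsto (fun n : ℕ => (n : ℂ)⁻¹ * Matrix.trace (toep d n ^ p)) atTop
        (nhds (∑' i : Fin p → ℤ,
          (∏ t, d (i t)) * (if ∑ t, i t = 0 then (1 : ℂ) else 0))) := by
  classical
  obtain ⟨q, rfl⟩ : ∃ q, p = q + 1 := ⟨p - 1, (Nat.succ_pred_eq_of_pos hp).symm⟩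
  set g : (Fin (q + 1) → ℤ) → ℂ :=
    fun i => (∏ t, d (i t)) * (if ∑ t, i t = 0 then (1 : ℂ) else 0) with hg
  have hbound : ∀ i : Fin (q + 1) → ℤ, ‖g i‖ ≤ ∏ t, ‖d (i t)‖ := by
    intro i
    rw [hg]
    by_cases hi : ∑ t, i t = 0
    · simp only [hi, if_pos, mul_one]
      rw [norm_prod]
    · simp only [hi, if_neg, not_false_iff, mul_zero, norm_zero]
      exact Finset.prod_nonneg fun t _ => norm_nonneg _
  have hsummable : Summable (fun i : Fin (q + 1) → ℤ => ‖g i‖) :=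
    (summable_pi_prod (fun k => ‖d k‖) hd (fun k => norm_nonneg _) (q + 1)).of_nonneg_of_le
      (fun i => norm_nonneg _) hbound
  refine ⟨hsummable, ?_⟩
  -- fiber counts
  set c : (n : ℕ) → (Fin (q + 1) → ℤ) → ℕ := fun n i =>
    (Finset.univ.filter fun x : Fin n × (Fin q → Fin n) => dvec q n x = i).card with hc
  set h : (n : ℕ) → (Fin (q + 1) → ℤ) → ℂ := fun n i =>
    (n : ℂ)⁻¹ * ((c n i : ℂ) * g i) with hh
  -- upper bound on fibers
  have hcle : ∀ n i, c n i ≤ n := by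
    intro n i
    rw [hc]
    calc (Finset.univ.filter fun x : Fin n × (Fin q → Fin n) => dvec q n x = i).card
        ≤ (Finset.univ : Finset (Fin n)).card := by
          apply Finset.card_le_card_of_injOn (fun x => x.1) (fun x _ => Finset.mem_univ _)
          intro x hx y hy hxy
          simp only [Finset.coe_filter, Set.mem_setOf_eq] at hx hy
          exact dvec_inj hx.2 hy.2 hxy
      _ = n := by simp
  -- Step A : identification of the normalized trace with a tsum
  have hA : ∀ n : ℕ, (n : ℂ)⁻¹ * Matrix.trace (toep d n ^ (q + 1)) = ∑' i, h n i := by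
    intro n
    have hzero : ∀ i ∉ Finset.univ.image (dvec q n), h n i = 0 := by
      intro i hi
      have : c n i = 0 := by
        rw [hc, Finset.card_eq_zero, Finset.filter_eq_empty_iff]
        intro x _
        exact fun hx => hi (Finset.mem_image.mpr ⟨x, Finset.mem_univ _, hx⟩)
      simp only [hh]
      rw [this]
      simp
    rw [tsum_eq_sum hzero, trace_toep_pow d q n]
    rw [Finset.sum_comp (fun i : Fin (q + 1) → ℤ => ∏ t, d (i t)) (dvec q n)]
    rw [Finset.mul_sum]
    refine Finset.sum_congr rfl ?_
    intro i hi
    obtain ⟨x, _, hx⟩ := Finset.mem_image.mp hi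
    have hzi : ∑ t, i t = 0 := sum_eq_zero_of_dvec hx
    simp only [hh, hg, hzi, if_pos, mul_one, nsmul_eq_mul, hc]
  -- Step B : uniform bound
  have hB : ∀ (n : ℕ) (i : Fin (q + 1) → ℤ), ‖h n i‖ ≤ ‖g i‖ := by
    intro n i
    rcases Nat.eq_zero_or_pos n with hn | hn
    · subst hn
      have : c 0 i = 0 := by
        rw [hc, Finset.card_eq_zero, Finset.filter_eq_empty_iff]
        intro x _
        exact absurd x.1.isLt (by omega)
      simp only [hh]
      rw [this]
      simp
    · simp only [hh]
      rw [norm_mul, norm_mul, norm_inv, Complex.norm_natCast, Complex.norm_natCast]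
      have h1 : (c n i : ℝ) ≤ n := by exact_mod_cast hcle n i
      have h2 : (0 : ℝ) < n := by exact_mod_cast hn
      calc (n : ℝ)⁻¹ * ((c n i : ℝ) * ‖g i‖)
          ≤ (n : ℝ)⁻¹ * ((n : ℝ) * ‖g i‖) := by
            apply mul_le_mul_of_nonneg_left
            · exact mul_le_mul_of_nonneg_right h1 (norm_nonneg _)
            · positivity
        _ = ‖g i‖ := by field_simp
  -- Step C : pointwise convergence
  have hC : ∀ i : Fin (q + 1) → ℤ, Tendsto (fun n => h n i) atTop (nhds (g i)) := by
    intro i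
    by_cases hzi : ∑ t, i t = 0
    · -- fiber count lower bound
      set M : ℕ := (∑ t, |i t|).toNat with hM
      have hMc : ((M : ℤ)) = ∑ t, |i t| := by
        rw [hM, Int.toNat_of_nonneg (Finset.sum_nonneg fun t _ => abs_nonneg _)]
      have hlow : ∀ n : ℕ, n - 2 * M ≤ c n i := by
        intro n
        have hsub : (Finset.Ico M (n - M)).card ≤ c n i := by
          rcases Nat.eq_zero_or_pos n with hn | hn
          · subst hn; simp
          · rw [hc]
            set F : ℕ → Fin n × (Fin q → Fin n) := fun a =>
              if hcond : (∑ t, |i t|) ≤ (((a % n : ℕ) : ℤ)) ∧ (((a % n : ℕ) : ℤ)) + (∑ t, |i t|) < n then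
                Classical.choose (dvec_construct hzi (⟨a % n, Nat.mod_lt _ hn⟩ : Fin n)
                  hcond.1 hcond.2)
              else (⟨0, hn⟩, fun _ => ⟨0, hn⟩) with hF
            have hFspec : ∀ a ∈ Finset.Ico M (n - M),
                dvec q n (F a) = i ∧ ((F a).1 : ℕ) = a := by
              intro a ha
              have hai := Finset.mem_Ico.mp ha
              have han : a < n := by omega
              have hmod : a % n = a := Nat.mod_eq_of_lt han
              have hcond : (∑ t, |i t|) ≤ (((a % n : ℕ) : ℤ)) ∧ (((a % n : ℕ) : ℤ)) + (∑ t, |i t|) < n := by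
                rw [hmod]
                constructor
                · rw [← hMc]; exact_mod_cast hai.1
                · rw [← hMc]; push_cast; omega
              rw [hF]
              simp only [dif_pos hcond]
              have hspec := Classical.choose_spec (dvec_construct hzi (⟨a % n, Nat.mod_lt _ hn⟩ : Fin n)
                hcond.1 hcond.2)
              refine ⟨hspec.1, ?_⟩
              rw [hspec.2]
              simp [hmod]
            apply Finset.card_le_card_of_injOn F
            · intro a ha
              rw [Finset.mem_coe, Finset.mem_filter]
              exact ⟨Finset.mem_univ _, (hFspec a ha).1⟩
            · intro a ha b hb hab
              have h1 := (hFspec a ha).2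
              have h2 := (hFspec b hb).2
              rw [hab] at h1
              exact h1.symm.trans h2
        have : (Finset.Ico M (n - M)).card = n - M - M := by rw [Nat.card_Ico]
        omega
      have hr : Tendsto (fun n : ℕ => ((c n i : ℝ) / n)) atTop (nhds 1) := by
        apply tendsto_of_tendsto_of_tendsto_of_le_of_le'
          (g := fun n : ℕ => 1 - (2 * M : ℝ) / n) (h := fun _ : ℕ => (1 : ℝ))
        · simpa using tendsto_const_nhds.sub (tendsto_const_div_atTop_nhds_zero_nat (2 * (M : ℝ)))
        · exact tendsto_const_nhds
        · filter_upwards [eventually_ge_atTop 1] with n hn1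
          have hn0 : (0 : ℝ) < n := by exact_mod_cast hn1
          have h1 : (n : ℝ) ≤ (c n i : ℝ) + 2 * M := by
            have := hlow n
            have : n ≤ c n i + 2 * M := by omega
            exact_mod_cast this
          have e : 1 - (2 * M : ℝ) / n = ((n : ℝ) - 2 * M) / n := by field_simp
          rw [e]
          have h2 : (n : ℝ) - 2 * M ≤ (c n i : ℝ) := by linarith
          gcongr
        · filter_upwards with n
          exact div_le_one_of_le₀ (by exact_mod_cast hcle n i) (Nat.cast_nonneg n)
      have hgieq : g i = ∏ t, d (i t) := by rw [hg]; simp [hzi]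
      have heq : ∀ n : ℕ, h n i = ((((c n i : ℝ) / n : ℝ)) : ℂ) * g i := by
        intro n
        simp only [hh]
        push_cast
        ring
      have hfin := ((Complex.continuous_ofReal.tendsto 1).comp hr).mul_const (g i)
      rw [show (fun n : ℕ => h n i) = fun n : ℕ => ((((c n i : ℝ) / n : ℝ)) : ℂ) * g i from
        funext heq]
      simpa using hfin
    · have hgi : g i = 0 := by rw [hg]; simp [hzi]
      have : ∀ n, h n i = 0 := by
        intro n
        have : c n i = 0 := by
          rw [hc, Finset.card_eq_zero, Finset.filter_eq_empty_iff]
          intro x _ hx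
          exact hzi (sum_eq_zero_of_dvec hx)
        simp only [hh]; rw [this]; simp
      rw [hgi]
      simpa [this] using tendsto_const_nhds (α := ℂ) (f := atTop (α := ℕ))
  -- conclusion
  have hfinal := tendsto_tsum_of_dominated_convergence hsummable hC
    (Filter.Eventually.of_forall hB)
  refine Tendsto.congr ?_ hfinal
  intro n
  exact (hA n).symm
end

section
/- Let $(d_k)$ be absolutely summable, $D_n = ((d_{i-j}))$, and for $m \ge 1$ let $D_{n,m}$ be the truncation with $(i,j)$ entry $d_{i-j}\chi_{[0,m]}(|i-j|)$. Then for any fixed $p\ge 1$ and $\alpha \in (0,1)$, $\lim_{n\to\infty} \frac{1}{n}\big|\mathrm{Tr}(D_n^p) - \mathrm{Tr}((D_{n,\lfloor n^\alpha\rfloor})^p)\big| = 0$. -/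
open Matrix Filter

/-- Truncated Toeplitz matrix: `(i,j)` entry `d (i-j)` if `|i-j| ≤ m`, else `0`. -/
def toepTr (d : ℤ → ℂ) (n m : ℕ) : Matrix (Fin n) (Fin n) ℂ :=
  Matrix.of fun i j => if ((i : ℤ) - (j : ℤ)).natAbs ≤ m then d ((i : ℤ) - (j : ℤ)) else 0

/- Auxiliary lemmas -/

lemma colsum_mul {n : ℕ} (X Y : Matrix (Fin n) (Fin n) ℂ) {C₁ C₂ : ℝ}
    (h₁ : 0 ≤ C₁) (hX : ∀ j, ∑ i, ‖X i j‖ ≤ C₁) (hY : ∀ j, ∑ i, ‖Y i j‖ ≤ C₂) :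
    ∀ j, ∑ i, ‖(X * Y) i j‖ ≤ C₁ * C₂ := by
  intro j
  calc ∑ i, ‖(X * Y) i j‖ ≤ ∑ i, ∑ k, ‖X i k‖ * ‖Y k j‖ := by
        refine Finset.sum_le_sum fun i _ => ?_
        rw [Matrix.mul_apply]
        refine (norm_sum_le _ _).trans ?_
        refine Finset.sum_le_sum fun k _ => ?_
        rw [norm_mul]
    _ = ∑ k, (∑ i, ‖X i k‖) * ‖Y k j‖ := by
        rw [Finset.sum_comm]
        simp [Finset.sum_mul]
    _ ≤ ∑ k, C₁ * ‖Y k j‖ :=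
        Finset.sum_le_sum fun k _ => mul_le_mul_of_nonneg_right (hX k) (norm_nonneg _)
    _ = C₁ * ∑ k, ‖Y k j‖ := by rw [Finset.mul_sum]
    _ ≤ C₁ * C₂ := mul_le_mul_of_nonneg_left (hY j) h₁

lemma colsum_le_tsum {n : ℕ} {f : ℤ → ℝ} (hf : Summable f) (hf0 : ∀ k, 0 ≤ f k)
    (M : Matrix (Fin n) (Fin n) ℂ) (hM : ∀ i j, ‖M i j‖ ≤ f ((i : ℤ) - (j : ℤ))) :
    ∀ j, ∑ i, ‖M i j‖ ≤ ∑' k, f k := by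
  intro j
  have hinj : Function.Injective (fun i : Fin n => (i : ℤ) - (j : ℤ)) := by
    intro a b hab
    simp only at hab
    have : (a : ℤ) = (b : ℤ) := by omega
    exact Fin.ext (by exact_mod_cast this)
  calc ∑ i, ‖M i j‖ ≤ ∑ i : Fin n, f ((i : ℤ) - (j : ℤ)) :=
        Finset.sum_le_sum fun i _ => hM i j
    _ = ∑ k ∈ Finset.univ.image (fun i : Fin n => (i : ℤ) - (j : ℤ)), f k :=
        (Finset.sum_image (fun a _ b _ h => hinj h)).symm
    _ ≤ ∑' k, f k := Summable.sum_le_tsum _ (fun _ _ => hf0 _) hf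

lemma colsum_pow {n : ℕ} (M : Matrix (Fin n) (Fin n) ℂ) {S : ℝ} (hS : 0 ≤ S)
    (hM : ∀ j, ∑ i, ‖M i j‖ ≤ S) (p : ℕ) :
    ∀ j, ∑ i, ‖(M ^ p) i j‖ ≤ S ^ p := by
  induction p with
  | zero =>
      intro j
      simp only [pow_zero]
      have : ∀ i : Fin n, ‖(1 : Matrix (Fin n) (Fin n) ℂ) i j‖ = if i = j then 1 else 0 := by
        intro i
        by_cases h : i = j <;> simp [Matrix.one_apply, h]
      simp [this]
  | succ q ih =>
      rw [pow_succ, pow_succ]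
      exact colsum_mul _ _ (pow_nonneg hS q) ih hM

lemma colsum_pow_sub {n : ℕ} (A B : Matrix (Fin n) (Fin n) ℂ) {S T : ℝ}
    (hS : 0 ≤ S) (hT : 0 ≤ T)
    (hA : ∀ j, ∑ i, ‖A i j‖ ≤ S) (hB : ∀ j, ∑ i, ‖B i j‖ ≤ S)
    (hAB : ∀ j, ∑ i, ‖(A - B) i j‖ ≤ T) (p : ℕ) (hp : 1 ≤ p) :
    ∀ j, ∑ i, ‖(A ^ p - B ^ p) i j‖ ≤ (p : ℝ) * S ^ (p - 1) * T := by
  induction p, hp using Nat.le_induction with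
  | base =>
      intro j
      simp only [pow_one, Nat.cast_one, one_mul, Nat.sub_self, pow_zero]
      exact hAB j
  | succ q hq ih =>
      intro j
      have hid : A ^ (q + 1) - B ^ (q + 1) = A ^ q * (A - B) + (A ^ q - B ^ q) * B := by
        rw [pow_succ, pow_succ]
        noncomm_ring
      have h1 : ∀ j, ∑ i, ‖(A ^ q * (A - B)) i j‖ ≤ S ^ q * T :=
        colsum_mul _ _ (pow_nonneg hS q) (colsum_pow A hS hA q) hAB
      have h2 : ∀ j, ∑ i, ‖((A ^ q - B ^ q) * B) i j‖ ≤ ((q : ℝ) * S ^ (q - 1) * T) * S :=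
        colsum_mul _ _ (by positivity) ih hB
      calc ∑ i, ‖(A ^ (q + 1) - B ^ (q + 1)) i j‖
          = ∑ i, ‖(A ^ q * (A - B) + (A ^ q - B ^ q) * B) i j‖ := by rw [hid]
        _ ≤ ∑ i, (‖(A ^ q * (A - B)) i j‖ + ‖((A ^ q - B ^ q) * B) i j‖) := by
            refine Finset.sum_le_sum fun i _ => ?_
            exact norm_add_le _ _
        _ = ∑ i, ‖(A ^ q * (A - B)) i j‖ + ∑ i, ‖((A ^ q - B ^ q) * B) i j‖ :=
            Finset.sum_add_distrib
        _ ≤ S ^ q * T + ((q : ℝ) * S ^ (q - 1) * T) * S := add_le_add (h1 j) (h2 j)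
        _ ≤ ((q + 1 : ℕ) : ℝ) * S ^ (q + 1 - 1) * T := by
            have hq1 : q - 1 + 1 = q := Nat.succ_pred_eq_of_pos hq
            have : S ^ (q - 1) * S = S ^ q := by
              rw [← pow_succ, hq1]
            have h3 : S ^ q * T + (q : ℝ) * S ^ (q - 1) * T * S
                = ((q : ℝ) + 1) * S ^ q * T := by
              rw [← this]; ring
            push_cast
            exact le_of_eq h3

lemma trace_norm_le {n : ℕ} (M : Matrix (Fin n) (Fin n) ℂ) {C : ℝ}
    (hC : 0 ≤ C) (hM : ∀ j, ∑ i, ‖M i j‖ ≤ C) :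
    ‖Matrix.trace M‖ ≤ (n : ℝ) * C := by
  calc ‖Matrix.trace M‖ ≤ ∑ i, ‖M i i‖ := norm_sum_le _ _
    _ ≤ ∑ _i : Fin n, C := by
        refine Finset.sum_le_sum fun i _ => ?_
        refine le_trans ?_ (hM i)
        exact Finset.single_le_sum (f := fun i' => ‖M i' i‖)
          (fun i' _ => norm_nonneg _) (Finset.mem_univ i)
    _ = (n : ℝ) * C := by simp [mul_comm]

/-- For absolutely summable `d`, fixed `p ≥ 1` and `α ∈ (0,1)`,
`(1/n) |Tr(Dₙᵖ) - Tr((D_{n,⌊n^α⌋})ᵖ)| → 0`. -/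
theorem truncation_trace_negligible (d : ℤ → ℂ)
    (hd : Summable fun k : ℤ => ‖d k‖) (p : ℕ) (hp : 1 ≤ p)
    (α : ℝ) (hα : α ∈ Set.Ioo (0 : ℝ) 1) :
    Tendsto
      (fun n : ℕ =>
        (n : ℝ)⁻¹ *
          ‖Matrix.trace (toep d n ^ p) -
            Matrix.trace (toepTr d n ⌊(n : ℝ) ^ α⌋₊ ^ p)‖)
      atTop (nhds 0) := by
  set S : ℝ := ∑' k, ‖d k‖ with hSdef
  have hS0 : 0 ≤ S := tsum_nonneg fun _ => norm_nonneg _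
  set G : ℕ → ℤ → ℝ := fun m k => if k.natAbs ≤ m then 0 else ‖d k‖ with hGdef
  have hG0 : ∀ m k, 0 ≤ G m k := by
    intro m k
    by_cases h : k.natAbs ≤ m <;> simp [hGdef, h]
  have hGle : ∀ m k, G m k ≤ ‖d k‖ := by
    intro m k
    by_cases h : k.natAbs ≤ m <;> simp [hGdef, h]
  have hGsum : ∀ m, Summable (G m) := fun m =>
    Summable.of_nonneg_of_le (hG0 m) (hGle m) hd
  set T : ℕ → ℝ := fun m => ∑' k, G m k with hTdef
  have hT0 : ∀ m, 0 ≤ T m := fun m => tsum_nonneg fun _ => hG0 m _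
  -- membership characterization
  have hmem : ∀ (m : ℕ) (k : ℤ), k ∈ Finset.Icc (-(m : ℤ)) (m : ℤ) ↔ k.natAbs ≤ m := by
    intro m k
    simp only [Finset.mem_Icc]
    omega
  -- T tends to zero
  have hTlim : Tendsto T atTop (nhds 0) := by
    have h1 : Tendsto (fun s : Finset ℤ => ∑' x : {x // x ∉ s}, ‖d x‖) atTop (nhds 0) :=
      tendsto_tsum_compl_atTop_zero fun k => ‖d k‖
    have h2 : Tendsto (fun m : ℕ => Finset.Icc (-(m : ℤ)) (m : ℤ)) atTop atTop := by
      apply tendsto_atTop_finset_of_monotone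
      · intro a b hab
        exact Finset.Icc_subset_Icc (by omega) (by exact_mod_cast hab)
      · intro x
        exact ⟨x.natAbs, by rw [hmem]⟩
    have h3 : Tendsto (fun m : ℕ => ∑' x : {x // x ∉ Finset.Icc (-(m : ℤ)) (m : ℤ)}, ‖d x‖)
        atTop (nhds 0) := h1.comp h2
    have heq : (fun m : ℕ => ∑' x : {x // x ∉ Finset.Icc (-(m : ℤ)) (m : ℤ)}, ‖d x‖) = T := by
      funext m
      have hsupp : Function.support (G m) ⊆ {x : ℤ | x ∉ Finset.Icc (-(m : ℤ)) (m : ℤ)} := by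
        intro k hk
        simp only [Set.mem_setOf_eq, hmem]
        intro hle
        apply hk
        simp [hGdef, hle]
      have h4 : ∑' x : {x : ℤ | x ∉ Finset.Icc (-(m : ℤ)) (m : ℤ)}, G m x = ∑' k, G m k :=
        tsum_subtype_eq_of_support_subset hsupp
      have h5 : ∑' x : {x : ℤ | x ∉ Finset.Icc (-(m : ℤ)) (m : ℤ)}, G m x
          = ∑' x : {x : ℤ | x ∉ Finset.Icc (-(m : ℤ)) (m : ℤ)}, ‖d x.1‖ := by
        refine tsum_congr fun x => ?_
        have hx : ¬ (x.1.natAbs ≤ m) := by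
          have := x.2
          simp only [Set.mem_setOf_eq, hmem] at this
          exact this
        simp [hGdef, hx]
      show ∑' x : {x : ℤ | x ∉ Finset.Icc (-(m : ℤ)) (m : ℤ)}, ‖d x.1‖ = T m
      rw [← h5, h4]
    rw [heq] at h3
    exact h3
  -- floor tends to infinity
  have hfloor : Tendsto (fun n : ℕ => ⌊(n : ℝ) ^ α⌋₊) atTop atTop :=
    tendsto_nat_floor_atTop.comp
      ((tendsto_rpow_atTop hα.1).comp tendsto_natCast_atTop_atTop)
  -- the dominating sequence
  have hglim : Tendsto (fun n : ℕ => (p : ℝ) * S ^ (p - 1) * T ⌊(n : ℝ) ^ α⌋₊)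
      atTop (nhds 0) := by
    have := (hTlim.comp hfloor).const_mul ((p : ℝ) * S ^ (p - 1))
    simpa using this
  -- squeeze
  refine squeeze_zero (fun n => by positivity) (fun n => ?_) hglim
  rcases Nat.eq_zero_or_pos n with hn | hn
  · subst hn
    simp only [Nat.cast_zero, _root_.inv_zero, zero_mul]
    exact mul_nonneg (mul_nonneg (by positivity) (by positivity)) (hT0 _)
  · set m := ⌊(n : ℝ) ^ α⌋₊
    set A := toep d n with hA
    set B := toepTr d n m with hB
    -- column sum bounds
    have hAcol : ∀ j, ∑ i, ‖A i j‖ ≤ S := by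
      refine colsum_le_tsum hd (fun _ => norm_nonneg _) A fun i j => ?_
      simp [hA, toep]
    have hBcol : ∀ j, ∑ i, ‖B i j‖ ≤ S := by
      refine colsum_le_tsum hd (fun _ => norm_nonneg _) B fun i j => ?_
      by_cases h : ((i : ℤ) - (j : ℤ)).natAbs ≤ m <;> simp [hB, toepTr, h]
    have hABcol : ∀ j, ∑ i, ‖(A - B) i j‖ ≤ T m := by
      refine colsum_le_tsum (hGsum m) (hG0 m) (A - B) fun i j => ?_
      have : (A - B) i j = if ((i : ℤ) - (j : ℤ)).natAbs ≤ m then 0 else d ((i : ℤ) - (j : ℤ)) := by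
        by_cases h : ((i : ℤ) - (j : ℤ)).natAbs ≤ m <;>
          simp [hA, hB, toep, toepTr, Matrix.sub_apply, h]
      rw [this]
      by_cases h : ((i : ℤ) - (j : ℤ)).natAbs ≤ m <;> simp [hGdef, h]
    have hcol := colsum_pow_sub A B hS0 (hT0 m) hAcol hBcol hABcol p hp
    have htr : ‖Matrix.trace (A ^ p) - Matrix.trace (B ^ p)‖
        ≤ (n : ℝ) * ((p : ℝ) * S ^ (p - 1) * T m) := by
      rw [← Matrix.trace_sub]
      exact trace_norm_le _
        (mul_nonneg (mul_nonneg (by positivity) (by positivity)) (hT0 m)) hcol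
    have hn0 : (0 : ℝ) < (n : ℝ) := by exact_mod_cast hn
    calc (n : ℝ)⁻¹ * ‖Matrix.trace (A ^ p) - Matrix.trace (B ^ p)‖
        ≤ (n : ℝ)⁻¹ * ((n : ℝ) * ((p : ℝ) * S ^ (p - 1) * T m)) := by
          exact mul_le_mul_of_nonneg_left htr (by positivity)
      _ = (p : ℝ) * S ^ (p - 1) * T m := by
          field_simp
end

section
/- Let $(d_k^{(\tau)})_{k\in\mathbb{Z}}$, $\tau = 1,\dots,m$, be absolutely summable complex sequences and $D_n^{(\tau)} = ((d^{(\tau)}_{i-j}))$. Then for any $\epsilon_1,\dots,\epsilon_p\in\{1,*\}$ and $\tau_1,\dots,\tau_p\in\{1,\dots,m\}$, $\lim_{n\to\infty}\frac{1}{n}\mathrm{Tr}(D_n^{(\tau_1)\epsilon_1}\cdots D_n^{(\tau_p)\epsilon_p}) = \sum_{i_1,\dots,i_p=-\infty}^{\infty} d^{(\tau_1)\epsilon_1}_{i_1}\cdots d^{(\tau_p)\epsilon_p}_{i_p}\,\delta_{0,\sum_{t=1}^p \epsilon'_t i_t}$, where $d^* = \overline{d}$ and $\epsilon'_t = \pm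 1$ according to $\epsilon_t = 1$ or $*$. -/
open Matrix Filter

/-- The sign `ε'`: `1` for `ε = 1` (encoded `true`) and `-1` for `ε = *` (encoded `false`). -/
def sgn (b : Bool) : ℤ := if b then 1 else -1

lemma toep_conjTranspose (f : ℤ → ℂ) (n : ℕ) :
    (toep f n)ᴴ = toep (fun k => (starRingEnd ℂ) (f (-k))) n := by
  ext i j
  simp [toep, conjTranspose_apply]

/-- The path through a product of `q+1` matrices, from `a` to `b` with intermediate points `j`. -/
def path {n q : ℕ} (a b : Fin n) (j : Fin q → Fin n) : Fin (q+2) → Fin n :=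
  Fin.cons a (Fin.snoc j b)

lemma prod_ofFn_entry {n : ℕ} : ∀ (q : ℕ) (M : Fin (q+1) → Matrix (Fin n) (Fin n) ℂ)
    (a b : Fin n),
    (List.ofFn M).prod a b =
      ∑ j : Fin q → Fin n, ∏ t : Fin (q+1), M t (path a b j t.castSucc) (path a b j t.succ) := by
  intro q
  induction q with
  | zero =>
    intro M a b
    simp [List.ofFn_succ, path, Fin.snoc]
  | succ q ih =>
    intro M a b
    rw [List.ofFn_succ, List.prod_cons, Matrix.mul_apply]
    have : ∀ c : Fin n, (List.ofFn fun t : Fin (q+1) => M t.succ).prod c b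
        = ∑ j : Fin q → Fin n, ∏ t : Fin (q+1),
            M t.succ (path c b j t.castSucc) (path c b j t.succ) := fun c => ih _ c b
    simp_rw [this, Finset.mul_sum]
    rw [← (Fin.consEquiv (fun _ : Fin (q+1) => Fin n)).sum_comp
      (fun j : Fin (q+1) → Fin n => ∏ t : Fin (q+2), M t (path a b j t.castSucc) (path a b j t.succ))]
    rw [Fintype.sum_prod_type]
    refine Finset.sum_congr rfl fun c _ => Finset.sum_congr rfl fun j _ => ?_
    conv_rhs => rw [Fin.prod_univ_succ]
    have hpath : (path a b (Fin.consEquiv (fun _ : Fin (q+1) => Fin n) (c, j))) ∘ Fin.succ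
        = path c b j := by
      show (Fin.cons a (Fin.snoc (Fin.cons c j) b) : Fin (q+3) → Fin n) ∘ Fin.succ
          = Fin.cons c (Fin.snoc j b)
      funext t
      rw [Function.comp_apply, Fin.cons_succ, ← Fin.cons_snoc_eq_snoc_cons]
    have h1 : ∀ s : Fin (q+2), path a b (Fin.consEquiv (fun _ : Fin (q+1) => Fin n) (c, j)) s.succ
        = path c b j s := fun s => congrFun hpath s
    congr 1
    · refine (Finset.prod_congr rfl fun t _ => ?_).symm
      rw [← Fin.succ_castSucc, h1, h1]

lemma pathA {n q : ℕ} (a : Fin n) (j : Fin q → Fin n) (t : Fin (q+1)) :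
    path a a j t.castSucc = (Fin.cons a j : Fin (q+1) → Fin n) t := by
  induction t using Fin.cases with
  | zero => rfl
  | succ s =>
    rw [← Fin.succ_castSucc]
    show (Fin.snoc j a : Fin (q+1) → Fin n) s.castSucc = j s
    simp

lemma pathB {n q : ℕ} (a : Fin n) (j : Fin q → Fin n) (t : Fin (q+1)) :
    path a a j t.succ = (Fin.cons a j : Fin (q+1) → Fin n) (t + 1) := by
  induction t using Fin.lastCases with
  | last =>
    rw [Fin.last_add_one]
    show (Fin.snoc j a : Fin (q+1) → Fin n) (Fin.last q) = a
    simp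
  | cast s =>
    rw [Fin.coeSucc_eq_succ]
    show (Fin.snoc j a : Fin (q+1) → Fin n) s.castSucc = j s
    simp

lemma trace_prod_toep (q n : ℕ) (g : Fin (q+1) → ℤ → ℂ) :
    Matrix.trace ((List.ofFn fun t => toep (g t) n).prod)
      = ∑ J : Fin (q+1) → Fin n, ∏ t : Fin (q+1), g t ((J t : ℤ) - (J (t+1) : ℤ)) := by
  have key : ∀ a : Fin n, (List.ofFn fun t => toep (g t) n).prod a a
      = ∑ j : Fin q → Fin n, ∏ t : Fin (q+1),
          g t (((Fin.cons a j : Fin (q+1) → Fin n) t : ℤ)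
            - ((Fin.cons a j : Fin (q+1) → Fin n) (t+1) : ℤ)) := by
    intro a
    rw [prod_ofFn_entry]
    refine Finset.sum_congr rfl fun j _ => Finset.prod_congr rfl fun t _ => ?_
    rw [pathA, pathB]
    rfl
  rw [Matrix.trace]
  simp only [Matrix.diag_apply, key]
  rw [← (Fin.consEquiv (fun _ : Fin (q+1) => Fin n)).sum_comp
    (fun J : Fin (q+1) → Fin n => ∏ t : Fin (q+1), g t ((J t : ℤ) - (J (t+1) : ℤ))),
    Fintype.sum_prod_type]
  rfl

/-- The number of cyclic paths with increments `k`. -/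
def cnt (n : ℕ) {q : ℕ} (k : Fin (q+1) → ℤ) : ℕ :=
  (Finset.univ.filter
    (fun J : Fin (q+1) → Fin n => (fun t => ((J t : ℤ) - (J (t+1) : ℤ))) = k)).card

lemma cnt_le (n q : ℕ) (k : Fin (q+1) → ℤ) : cnt n k ≤ n := by
  have : cnt n k ≤ (Finset.univ : Finset (Fin n)).card := by
    rw [cnt]
    apply Finset.card_le_card_of_injOn (fun J => J 0) (fun _ _ => Finset.mem_univ _)
    intro J hJ J' hJ' h0
    simp only [Finset.mem_coe, Finset.mem_filter] at hJ hJ'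
    have hk : ∀ t : Fin (q+1), (J t : ℤ) - (J (t+1) : ℤ) = k t := fun t => congrFun hJ.2 t
    have hk' : ∀ t : Fin (q+1), (J' t : ℤ) - (J' (t+1) : ℤ) = k t := fun t => congrFun hJ'.2 t
    funext t
    induction t using Fin.induction with
    | zero => exact h0
    | succ s ihs =>
      have h1 := hk s.castSucc
      have h2 := hk' s.castSucc
      rw [Fin.coeSucc_eq_succ] at h1 h2
      rw [ihs] at h1
      have h4 : ((J s.succ : ℤ)) = ((J' s.succ : ℤ)) := by linarith
      exact Fin.ext (by exact_mod_cast h4)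
  simpa using this

lemma cnt_eq_zero (n q : ℕ) (k : Fin (q+1) → ℤ) (h : ∑ t, k t ≠ 0) : cnt n k = 0 := by
  rw [cnt]
  rw [Finset.card_eq_zero, Finset.filter_eq_empty_iff]
  intro J _ hJ
  apply h
  have : ∑ t, k t = ∑ t : Fin (q+1), ((J t : ℤ) - (J (t+1) : ℤ)) := by
    rw [← hJ]
  rw [this, Finset.sum_sub_distrib]
  rw [Fintype.sum_equiv (Equiv.addRight (1 : Fin (q+1))) (fun t => ((J (t+1) : ℤ)))
    (fun t => (J t : ℤ)) (fun t => rfl)]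
  ring

lemma cnt_ge (n q : ℕ) (k : Fin (q+1) → ℤ) (h : ∑ t, k t = 0) :
    (n : ℤ) - 2 * ∑ t, |k t| ≤ (cnt n k : ℤ) := by
  set C : ℤ := ∑ t, |k t| with hC
  have hC0 : 0 ≤ C := Finset.sum_nonneg fun t _ => abs_nonneg _
  rcases Nat.eq_zero_or_pos n with hn | hn
  · have : (n : ℤ) - 2 * C ≤ 0 := by
      rw [hn]; push_cast; linarith
    exact this.trans (by positivity)
  -- prefix sums
  set kext : ℕ → ℤ := fun s => if h : s < q+1 then k ⟨s, h⟩ else 0 with hkext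
  set S : ℕ → ℤ := fun a => ∑ s ∈ Finset.range a, kext s with hS
  have hkx : ∀ t : Fin (q+1), kext t.val = k t := by
    intro t
    simp only [hkext, t.isLt, dif_pos]
  have hSbound : ∀ a, a ≤ q+1 → |S a| ≤ C := by
    intro a ha
    calc |S a| ≤ ∑ s ∈ Finset.range a, |kext s| := Finset.abs_sum_le_sum_abs _ _
    _ ≤ ∑ s ∈ Finset.range (q+1), |kext s| :=
        Finset.sum_le_sum_of_subset_of_nonneg (Finset.range_subset_range.2 ha)
          (fun _ _ _ => abs_nonneg _)
    _ = ∑ t : Fin (q+1), |kext t.val| := (Fin.sum_univ_eq_sum_range (fun s => |kext s|) (q+1)).symm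
    _ = C := by rw [hC]; exact Finset.sum_congr rfl fun t _ => by rw [hkx]
  have hStot : S (q+1) = 0 := by
    rw [hS]
    simp only
    rw [← Fin.sum_univ_eq_sum_range kext (q+1)]
    rw [← h]
    exact Finset.sum_congr rfl fun t _ => hkx t
  -- the injection
  set φ : ℤ → (Fin (q+1) → Fin n) :=
    fun x t => (⟨(x - S t.val).toNat % n, Nat.mod_lt _ hn⟩ : Fin n) with hφ
  have hval : ∀ x ∈ Finset.Ico C ((n:ℤ) - C), ∀ t : Fin (q+1), ((φ x t : ℕ) : ℤ) = x - S t.val := by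
    intro x hx t
    rw [Finset.mem_Ico] at hx
    have hSb := hSbound t.val (by omega)
    rw [abs_le] at hSb
    have h1 : 0 ≤ x - S t.val := by omega
    have h2 : x - S t.val < n := by omega
    have h3 : (x - S t.val).toNat < n := by omega
    show (((x - S t.val).toNat % n : ℕ) : ℤ) = x - S t.val
    rw [Nat.mod_eq_of_lt h3]
    omega
  have hmem : ∀ x ∈ Finset.Ico C ((n:ℤ) - C), φ x ∈ Finset.univ.filter
      (fun J : Fin (q+1) → Fin n => (fun t => ((J t : ℤ) - (J (t+1) : ℤ))) = k) := by
    intro x hx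
    rw [Finset.mem_filter]
    refine ⟨Finset.mem_univ _, funext fun t => ?_⟩
    rw [hval x hx t, hval x hx (t+1)]
    rcases Nat.lt_or_ge t.val q with ht | ht
    · have h1 : ((t+1 : Fin (q+1)) : ℕ) = t.val + 1 := by
        rw [Fin.val_add_one]
        have : t ≠ Fin.last q := fun hcon => absurd ht (by rw [hcon]; simp)
        simp [this]
      rw [h1]
      have : S (t.val + 1) = S t.val + kext t.val := Finset.sum_range_succ kext t.val
      rw [this, hkx t]
      ring
    · have htq : t.val = q := by omega
      have h1 : ((t+1 : Fin (q+1)) : ℕ) = 0 := by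
        have : t = Fin.last q := Fin.ext (by simpa using htq)
        rw [Fin.val_add_one]
        simp [this]
      rw [h1]
      have hS0 : S 0 = 0 := by simp [hS]
      rw [hS0, htq]
      have : S (q + 1) = S q + kext q := Finset.sum_range_succ kext q
      have hkq : kext q = k t := by
        rw [← hkx t, htq]
      rw [hStot] at this
      omega
  have hinj : Set.InjOn φ (Finset.Ico C ((n:ℤ) - C)) := by
    intro x hx y hy hxy
    have h0 : S (0 : Fin (q+1)).val = 0 := by simp [hS]
    have e1 := hval x hx 0
    have e2 := hval y hy 0
    rw [hxy] at e1
    rw [h0] at e1 e2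
    omega
  have hcard := Finset.card_le_card_of_injOn φ hmem hinj
  rw [Int.card_Ico] at hcard
  have h4 : ((n:ℤ) - C - C).toNat ≤ cnt n k := hcard
  have h5 : ((n:ℤ) - C - C) ≤ (((n:ℤ) - C - C).toNat : ℤ) := Int.self_le_toNat _
  have h6 : ((((n:ℤ) - C - C).toNat : ℕ) : ℤ) ≤ (cnt n k : ℤ) := by exact_mod_cast h4
  linarith

lemma sum_eq_tsum_cnt (n q : ℕ) (g : Fin (q+1) → ℤ → ℂ) :
    ∑ J : Fin (q+1) → Fin n, ∏ t : Fin (q+1), g t ((J t : ℤ) - (J (t+1) : ℤ))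
      = ∑' k : Fin (q+1) → ℤ, (cnt n k : ℂ) * ∏ t, g t (k t) := by
  classical
  set key : (Fin (q+1) → Fin n) → (Fin (q+1) → ℤ) :=
    fun J => fun t => ((J t : ℤ) - (J (t+1) : ℤ)) with hkey
  have h1 : ∑ J : Fin (q+1) → Fin n, ∏ t : Fin (q+1), g t ((J t : ℤ) - (J (t+1) : ℤ))
      = ∑ k ∈ Finset.univ.image key, (cnt n k : ℂ) * ∏ t, g t (k t) := by
    have := Finset.sum_comp (s := (Finset.univ : Finset (Fin (q+1) → Fin n)))
      (fun k : Fin (q+1) → ℤ => ∏ t, g t (k t)) key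
    simp only [nsmul_eq_mul] at this
    exact this
  rw [h1, eq_comm]
  apply tsum_eq_sum
  intro k hk
  have : cnt n k = 0 := by
    rw [cnt, Finset.card_eq_zero, Finset.filter_eq_empty_iff]
    intro J _ hJ
    exact hk (Finset.mem_image.2 ⟨J, Finset.mem_univ _, hJ⟩)
  rw [this]
  simp

lemma summable_prod_norm : ∀ (p : ℕ) (g : Fin p → ℤ → ℂ),
    (∀ t, Summable fun x => ‖g t x‖) →
    Summable fun k : Fin p → ℤ => ∏ t, ‖g t (k t)‖ := by
  intro p
  induction p with
  | zero =>
    intro g hg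
    exact Summable.of_finite
  | succ p ih =>
    intro g hg
    have hih : Summable fun r : Fin p → ℤ => ∏ t : Fin p, ‖g t.succ (r t)‖ :=
      ih (fun t => g t.succ) (fun t => hg t.succ)
    have h2 : Summable (fun x : ℤ × (Fin p → ℤ) =>
        ‖g 0 x.1‖ * ∏ t : Fin p, ‖g t.succ (x.2 t)‖) :=
      Summable.mul_of_nonneg (f := fun a : ℤ => ‖g 0 a‖)
        (g := fun r : Fin p → ℤ => ∏ t : Fin p, ‖g t.succ (r t)‖) (hg 0) hih
        (fun _ => norm_nonneg _)
        (fun _ => Finset.prod_nonneg fun _ _ => norm_nonneg _)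
    have := (Fin.consEquiv (fun _ : Fin (p+1) => ℤ)).summable_iff
      (f := fun k : Fin (p+1) → ℤ => ∏ t, ‖g t (k t)‖)
    rw [← this]
    apply h2.congr
    rintro ⟨a, r⟩
    show ‖g 0 a‖ * ∏ t : Fin p, ‖g t.succ (r t)‖
        = ∏ t : Fin (p+1), ‖g t ((Fin.cons a r : Fin (p+1) → ℤ) t)‖
    rw [Fin.prod_univ_succ]
    simp [Fin.cons_zero, Fin.cons_succ]

lemma cnt_div_tendsto (q : ℕ) (k : Fin (q+1) → ℤ) :
    Tendsto (fun n : ℕ => (cnt n k : ℂ) * (n : ℂ)⁻¹) atTop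
      (nhds (if ∑ t, k t = 0 then (1:ℂ) else 0)) := by
  by_cases h : ∑ t, k t = 0
  · rw [if_pos h]
    have hreal : Tendsto (fun n : ℕ => (cnt n k : ℝ) / n) atTop (nhds 1) := by
      set C : ℤ := ∑ t, |k t| with hC
      have hC0 : (0:ℝ) ≤ (C:ℝ) := by
        have : (0:ℤ) ≤ C := Finset.sum_nonneg fun t _ => abs_nonneg _
        exact_mod_cast this
      have hlow : Tendsto (fun n : ℕ => 1 - 2*(C:ℝ)/n) atTop (nhds 1) := by
        have := tendsto_const_div_atTop_nhds_zero_nat (2*(C:ℝ))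
        have h2 := tendsto_const_nhds (x := (1:ℝ)) (f := atTop (α := ℕ)) |>.sub this
        simpa using h2
      refine tendsto_of_tendsto_of_tendsto_of_le_of_le' hlow tendsto_const_nhds ?_ ?_
      · filter_upwards [eventually_ge_atTop 1] with n hn
        have hge := cnt_ge n q k h
        have hnpos : (0:ℝ) < n := by exact_mod_cast hn
        have hcr : (n:ℝ) - 2*(C:ℝ) ≤ (cnt n k : ℝ) := by exact_mod_cast hge
        rw [le_div_iff₀ hnpos]
        have heq : (1 - 2*(C:ℝ)/n) * n = n - 2*C := by field_simp
        rw [heq]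
        exact hcr
      · filter_upwards [eventually_ge_atTop 1] with n hn
        have hle := cnt_le n q k
        have hnpos : (0:ℝ) < n := by exact_mod_cast hn
        rw [div_le_one hnpos]
        exact_mod_cast hle
    have := (Complex.continuous_ofReal.tendsto 1).comp hreal
    apply this.congr
    intro n
    simp only [Function.comp_apply]
    push_cast
    rw [div_eq_mul_inv]
  · rw [if_neg h]
    have : (fun n : ℕ => (cnt n k : ℂ) * (n : ℂ)⁻¹) = fun _ => 0 := by
      funext n
      rw [cnt_eq_zero n q k h]
      simp
    rw [this]
    exact tendsto_const_nhds

/-- Main lemma: the case of a word of Toeplitz matrices (no adjoints). -/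
lemma main_toep_limit (q : ℕ) (g : Fin (q+1) → ℤ → ℂ)
    (hg : ∀ t, Summable fun x => ‖g t x‖) :
    Tendsto (fun n : ℕ => (n : ℂ)⁻¹ *
        Matrix.trace ((List.ofFn fun t => toep (g t) n).prod)) atTop
      (nhds (∑' k : Fin (q+1) → ℤ,
        (∏ t, g t (k t)) * (if ∑ t, k t = 0 then (1:ℂ) else 0))) := by
  have key : ∀ n : ℕ, (n : ℂ)⁻¹ * Matrix.trace ((List.ofFn fun t => toep (g t) n).prod)
      = ∑' k : Fin (q+1) → ℤ, ((cnt n k : ℂ) * (n:ℂ)⁻¹) * ∏ t, g t (k t) := by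
    intro n
    rw [trace_prod_toep, sum_eq_tsum_cnt, ← tsum_mul_left]
    exact tsum_congr fun k => by ring
  have hbdd : Summable fun k : Fin (q+1) → ℤ => ∏ t, ‖g t (k t)‖ :=
    summable_prod_norm _ g hg
  have hmain : Tendsto
      (fun n : ℕ => ∑' k : Fin (q+1) → ℤ, ((cnt n k : ℂ) * (n:ℂ)⁻¹) * ∏ t, g t (k t)) atTop
      (nhds (∑' k : Fin (q+1) → ℤ,
        (∏ t, g t (k t)) * (if ∑ t, k t = 0 then (1:ℂ) else 0))) := by
    apply tendsto_tsum_of_dominated_convergence hbdd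
    · intro k
      have := (cnt_div_tendsto q k).mul_const (∏ t, g t (k t))
      simpa [mul_comm] using this
    · filter_upwards with n
      intro k
      rw [norm_mul]
      have h1 : ‖(cnt n k : ℂ) * (n:ℂ)⁻¹‖ ≤ 1 := by
        rcases Nat.eq_zero_or_pos n with hn | hn
        · simp [hn]
        · rw [norm_mul, norm_inv]
          have e1 : ‖(cnt n k : ℂ)‖ = (cnt n k : ℝ) := by
            rw [Complex.norm_natCast]
          have e2 : ‖(n : ℂ)‖ = (n : ℝ) := by
            rw [Complex.norm_natCast]
          rw [e1, e2]
          have hnpos : (0:ℝ) < n := by exact_mod_cast hn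
          rw [← div_eq_mul_inv, div_le_one hnpos]
          exact_mod_cast cnt_le n q k
      calc ‖(cnt n k : ℂ) * (n:ℂ)⁻¹‖ * ‖∏ t, g t (k t)‖
          ≤ 1 * ‖∏ t, g t (k t)‖ := by
            apply mul_le_mul_of_nonneg_right h1 (norm_nonneg _)
      _ = ‖∏ t, g t (k t)‖ := one_mul _
      _ = ∏ t, ‖g t (k t)‖ := norm_prod _ _
  exact hmain.congr fun n => (key n).symm

/-- For absolutely summable sequences `d⁽¹⁾,…,d⁽ᵐ⁾` and any word in the corresponding
deterministic Toeplitz matrices and their conjugate transposes,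
`(1/n) Tr(D^{(τ₁)ε₁} ⋯ D^{(τ_p)ε_p}) →
  ∑_{i₁,…,i_p} d^{(τ₁)ε₁}_{i₁} ⋯ d^{(τ_p)ε_p}_{i_p} δ_{0, ∑ ε'_t i_t}`. -/
theorem normalizedTrace_toeplitz_word_tendsto (m : ℕ) (d : Fin m → ℤ → ℂ)
    (hd : ∀ τ, Summable fun k : ℤ => ‖d τ k‖) (p : ℕ)
    (τ : Fin p → Fin m) (ε : Fin p → Bool) :
    Tendsto
      (fun n : ℕ =>
        (n : ℂ)⁻¹ *
          Matrix.trace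
            (List.ofFn fun t =>
              if ε t then toep (d (τ t)) n else (toep (d (τ t)) n)ᴴ).prod)
      atTop
      (nhds (∑' i : Fin p → ℤ,
        (∏ t, if ε t then d (τ t) (i t) else (starRingEnd ℂ) (d (τ t) (i t))) *
          (if ∑ t, sgn (ε t) * i t = 0 then (1 : ℂ) else 0))) := by
  classical
  set g : Fin p → ℤ → ℂ :=
    fun t x => if ε t then d (τ t) x else (starRingEnd ℂ) (d (τ t) (-x)) with hgdef
  have hg : ∀ t, Summable fun x => ‖g t x‖ := by
    intro t
    by_cases h : ε t
    · simp only [hgdef, h, if_true]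
      exact hd (τ t)
    · simp only [hgdef, h, if_false]
      have : Summable fun x : ℤ => ‖d (τ t) (-x)‖ :=
        ((Equiv.neg ℤ).summable_iff (f := fun x : ℤ => ‖d (τ t) x‖)).2 (hd (τ t))
      apply this.congr
      intro x
      simp
  have hmat : ∀ n : ℕ,
      (List.ofFn fun t =>
        if ε t then toep (d (τ t)) n else (toep (d (τ t)) n)ᴴ)
      = List.ofFn fun t => toep (g t) n := by
    intro n
    congr 1
    funext t
    by_cases h : ε t
    · simp only [h, if_true]
      congr 1
      funext x
      simp [hgdef, h]
    · simp only [h, if_false]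
      rw [toep_conjTranspose]
      congr 1
      funext x
      simp [hgdef, h]
  -- reindex the limit value
  set e : (Fin p → ℤ) ≃ (Fin p → ℤ) :=
    Equiv.piCongrRight (fun t => if ε t then Equiv.refl ℤ else Equiv.neg ℤ) with hedef
  have hecomp : ∀ (i : Fin p → ℤ) (t : Fin p), e i t = if ε t then i t else -(i t) := by
    intro i t
    simp only [hedef, Equiv.piCongrRight_apply, Pi.map_apply]
    by_cases h : ε t <;> simp [h]
  have hRHS : (∑' i : Fin p → ℤ,
        (∏ t, if ε t then d (τ t) (i t) else (starRingEnd ℂ) (d (τ t) (i t))) *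
          (if ∑ t, sgn (ε t) * i t = 0 then (1 : ℂ) else 0))
      = ∑' k : Fin p → ℤ, (∏ t, g t (k t)) * (if ∑ t, k t = 0 then (1:ℂ) else 0) := by
    rw [← e.tsum_eq (fun k => (∏ t, g t (k t)) * (if ∑ t, k t = 0 then (1:ℂ) else 0))]
    apply tsum_congr
    intro i
    congr 1
    · apply Finset.prod_congr rfl
      intro t _
      rw [hecomp i t]
      by_cases h : ε t <;> simp [hgdef, h]
    · congr 1
      apply propext
      constructor <;> intro hsum <;> [skip; skip] <;>
        · rw [← hsum]
          apply Finset.sum_congr rfl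
          intro t _
          rw [hecomp i t, sgn]
          by_cases h : ε t <;> simp [h] <;> ring
  rw [hRHS]
  have hLHS : ∀ n : ℕ, (n : ℂ)⁻¹ *
      Matrix.trace (List.ofFn fun t =>
        if ε t then toep (d (τ t)) n else (toep (d (τ t)) n)ᴴ).prod
      = (n : ℂ)⁻¹ * Matrix.trace ((List.ofFn fun t => toep (g t) n).prod) := by
    intro n
    rw [hmat n]
  cases p with
  | zero =>
    -- empty word: trace of identity is n
    have hval : ∀ n : ℕ, n ≠ 0 → (n : ℂ)⁻¹ *
        Matrix.trace (List.ofFn fun t : Fin 0 =>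
          if ε t then toep (d (τ t)) n else (toep (d (τ t)) n)ᴴ).prod = 1 := by
      intro n hn
      rw [List.ofFn_zero, List.prod_nil, Matrix.trace_one]
      simp
      rw [inv_mul_cancel₀]
      exact_mod_cast hn
    have hlim : (∑' k : Fin 0 → ℤ, (∏ t, g t (k t)) * (if ∑ t, k t = 0 then (1:ℂ) else 0))
        = 1 := by
      rw [tsum_eq_single (fun t => t.elim0)]
      · simp
      · intro b hb
        exact absurd (funext fun t => t.elim0) hb
    rw [hlim]
    apply Tendsto.congr' _ tendsto_const_nhds
    filter_upwards [eventually_ge_atTop 1] with n hn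
    exact (hval n (by omega)).symm
  | succ q =>
    have := main_toep_limit q g hg
    apply this.congr
    intro n
    exact (hLHS n).symm
end

section
/- Let $(d_k)$ be absolutely summable, $D_n = ((d_{i-j}))$, and $P_n$ the backward identity permutation matrix. If a monomial in $P_n$ and $D_n, D_n^*$ contains an odd number of factors $P_n$, then $\frac{1}{n}\mathrm{Tr}$ of the monomial tends to $0$ as $n\to\infty$. (In particular, $\frac{1}{n}\mathrm{Tr}(P_n D_n^p) \to 0$ for every $p \ge 0$.) -/
open Matrix Filter

/-- Backward identity permutation matrix. -/
def bId (n : ℕ) : Matrix (Fin n) (Fin n) ℂ :=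
  Matrix.of fun i j => if (i : ℕ) + 1 + ((j : ℕ) + 1) = n + 1 then 1 else 0

open scoped ENNReal

def matOf (d : ℤ → ℂ) (n : ℕ) : Fin 3 → Matrix (Fin n) (Fin n) ℂ :=
  fun f => if f = 0 then bId n else if f = 1 then toep d n else (toep d n)ᴴ

noncomputable def symG (d : ℤ → ℂ) : ℤ → ℝ≥0∞ :=
  fun u => (‖d u‖₊ : ℝ≥0∞) + (‖d (-u)‖₊ : ℝ≥0∞)

lemma matOf_entry_le (d : ℤ → ℂ) {f : Fin 3} (hf : f ≠ 0) (n : ℕ) (i x : Fin n) :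
    (‖matOf d n f i x‖₊ : ℝ≥0∞) ≤ symG d ((x : ℤ) - (i : ℤ)) := by
  fin_cases f
  · exact absurd rfl hf
  · have e1 : matOf d n ⟨1, by omega⟩ = toep d n := rfl
    rw [e1, symG]
    have : toep d n i x = d (-((x:ℤ) - (i:ℤ))) := by
      show d ((i:ℤ) - (x:ℤ)) = _
      ring_nf
    rw [this]
    exact self_le_add_left _ _
  · have e1 : matOf d n ⟨2, by omega⟩ = (toep d n)ᴴ := rfl
    rw [e1, symG]
    have : (toep d n)ᴴ i x = starRingEnd ℂ (d ((x:ℤ) - (i:ℤ))) := by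
      simp [toep, Matrix.conjTranspose_apply]
    rw [this]
    rw [show ‖starRingEnd ℂ (d ((x:ℤ) - (i:ℤ)))‖₊ = ‖d ((x:ℤ) - (i:ℤ))‖₊ from nnnorm_star _]
    exact le_self_add

lemma conv_tsum_eq (G h : ℤ → ℝ≥0∞) :
    (∑' w : ℤ, ∑' u : ℤ, G u * h (w - u)) = (∑' u, G u) * ∑' w, h w := by
  rw [ENNReal.tsum_comm]
  calc (∑' u : ℤ, ∑' w : ℤ, G u * h (w - u))
      = ∑' u : ℤ, G u * ∑' w : ℤ, h (w - u) := by
        simp [ENNReal.tsum_mul_left]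
    _ = ∑' u : ℤ, G u * ∑' w : ℤ, h w := by
        congr 1; funext u; congr 1
        exact (Equiv.subRight u).tsum_eq h
    _ = (∑' u, G u) * ∑' w, h w := ENNReal.tsum_mul_right

lemma sum_comp_le_tsum {F : ℤ → ℝ≥0∞} {n : ℕ} (e : Fin n → ℤ)
    (he : Function.Injective e) : ∑ x : Fin n, F (e x) ≤ ∑' u : ℤ, F u := by
  rw [← tsum_fintype (L := SummationFilter.unconditional _)]
  exact ENNReal.tsum_comp_le_tsum_of_injective he F

lemma symG_tsum_ne_top (d : ℤ → ℂ) (hd : Summable fun k : ℤ => ‖d k‖) :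
    (∑' u : ℤ, symG d u) ≠ ⊤ := by
  have hnn : Summable fun k : ℤ => ‖d k‖₊ := by
    rw [← NNReal.summable_coe]; simpa using hd
  have h1 : (∑' u : ℤ, (‖d u‖₊ : ℝ≥0∞)) ≠ ⊤ :=
    ENNReal.tsum_coe_ne_top_iff_summable.2 hnn
  have h2 : (∑' u : ℤ, (‖d (-u)‖₊ : ℝ≥0∞)) = ∑' u : ℤ, (‖d u‖₊ : ℝ≥0∞) :=
    (Equiv.neg ℤ).tsum_eq fun u => (‖d u‖₊ : ℝ≥0∞)
  simp only [symG]
  rw [ENNReal.tsum_add, h2]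
  exact ENNReal.add_ne_top.2 ⟨h1, h1⟩

lemma entryBound (d : ℤ → ℂ) (hd : Summable fun k : ℤ => ‖d k‖) (L : List (Fin 3)) :
    ∃ h : ℤ → ℝ≥0∞, (∑' x : ℤ, h x) ≠ ⊤ ∧
      ∀ (n : ℕ) (i j : Fin n),
        (‖(L.map (matOf d n)).prod i j‖₊ : ℝ≥0∞) ≤
          if Even (L.count 0) then h ((j : ℤ) - (i : ℤ))
          else h ((i : ℤ) + (j : ℤ) - ((n : ℤ) - 1)) := by
  induction L with
  | nil =>
    refine ⟨fun x => if x = 0 then 1 else 0, ?_, ?_⟩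
    · rw [tsum_ite_eq]; exact ENNReal.one_ne_top
    · intro n i j
      simp only [List.map_nil, List.prod_nil, List.count_nil, Even.zero, if_true]
      rcases eq_or_ne i j with rfl | hij
      · simp
      · rw [Matrix.one_apply_ne hij]
        simp
  | cons f L' ih =>
    obtain ⟨h, hne, hb⟩ := ih
    by_cases hf : f = 0
    · subst hf
      refine ⟨h, hne, ?_⟩
      intro n i j
      have hn : 0 < n := i.pos
      set x₀ : Fin n := ⟨n - 1 - (i : ℕ), by omega⟩ with hx₀def
      have hentry : ((((0 : Fin 3) :: L').map (matOf d n)).prod) i j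
          = ((L'.map (matOf d n)).prod) x₀ j := by
        rw [List.map_cons, List.prod_cons, Matrix.mul_apply]
        have hcollapse : ∀ x : Fin n, matOf d n 0 i x * ((L'.map (matOf d n)).prod) x j
            = if x = x₀ then ((L'.map (matOf d n)).prod) x j else 0 := by
          intro x
          have e0 : matOf d n 0 i x = if (i : ℕ) + 1 + ((x : ℕ) + 1) = n + 1 then 1 else 0 := rfl
          by_cases hx : x = x₀
          · subst hx
            rw [if_pos rfl, e0, if_pos (by simp only [hx₀def]; omega), one_mul]
          · have hxv : ¬ ((i : ℕ) + 1 + ((x : ℕ) + 1) = n + 1) := by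
              intro hc
              apply hx
              apply Fin.ext
              simp only [hx₀def]
              omega
            rw [if_neg hx, e0, if_neg hxv, zero_mul]
        rw [Finset.sum_congr rfl fun x _ => hcollapse x]
        rw [Finset.sum_ite_eq' Finset.univ x₀ (fun x => ((L'.map (matOf d n)).prod) x j)]
        simp
      have hx₀ : ((x₀ : ℕ) : ℤ) = (n : ℤ) - 1 - (i : ℤ) := by
        have h1 : (x₀ : ℕ) = n - 1 - (i : ℕ) := rfl
        have h2 := i.isLt
        omega
      rw [hentry]
      have hb' := hb n x₀ j
      rw [List.count_cons_self]
      by_cases hE : Even (L'.count 0)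
      · rw [if_pos hE] at hb'
        rw [if_neg (by rw [Nat.even_add_one, not_not]; exact hE)]
        calc (‖((L'.map (matOf d n)).prod) x₀ j‖₊ : ℝ≥0∞) ≤ h ((j : ℤ) - (x₀ : ℤ)) := hb'
          _ = h ((i : ℤ) + (j : ℤ) - ((n : ℤ) - 1)) := by congr 1; omega
      · rw [if_neg hE] at hb'
        rw [if_pos (Nat.even_add_one.2 hE)]
        calc (‖((L'.map (matOf d n)).prod) x₀ j‖₊ : ℝ≥0∞)
            ≤ h ((x₀ : ℤ) + (j : ℤ) - ((n : ℤ) - 1)) := hb'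
          _ = h ((j : ℤ) - (i : ℤ)) := by congr 1; omega
    · -- Toeplitz factor: convolution
      refine ⟨fun w => ∑' u : ℤ, symG d u * h (w - u), ?_, ?_⟩
      · rw [conv_tsum_eq]
        exact ENNReal.mul_ne_top (symG_tsum_ne_top d hd) hne
      intro n i j
      have hcnt : (f :: L').count 0 = L'.count 0 := List.count_cons_of_ne hf
      rw [hcnt]
      have hstep : (‖(((f :: L').map (matOf d n)).prod) i j‖₊ : ℝ≥0∞)
          ≤ ∑ x : Fin n, (‖matOf d n f i x‖₊ : ℝ≥0∞) *
              (‖((L'.map (matOf d n)).prod) x j‖₊ : ℝ≥0∞) := by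
        rw [List.map_cons, List.prod_cons, Matrix.mul_apply]
        refine le_trans (ENNReal.coe_le_coe.2 (nnnorm_sum_le Finset.univ
          (fun x => matOf d n f i x * ((L'.map (matOf d n)).prod) x j))) ?_
        rw [ENNReal.coe_finset_sum]
        exact Finset.sum_le_sum fun x _ => by rw [nnnorm_mul, ENNReal.coe_mul]
      by_cases hE : Even (L'.count 0)
      · rw [if_pos hE]
        refine le_trans hstep ?_
        calc (∑ x : Fin n, (‖matOf d n f i x‖₊ : ℝ≥0∞) *
              (‖((L'.map (matOf d n)).prod) x j‖₊ : ℝ≥0∞))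
            ≤ ∑ x : Fin n, symG d ((x : ℤ) - (i : ℤ)) *
                h (((j : ℤ) - (i : ℤ)) - ((x : ℤ) - (i : ℤ))) := by
              refine Finset.sum_le_sum fun x _ => ?_
              refine mul_le_mul' (matOf_entry_le d hf n i x) ?_
              have := hb n x j
              rw [if_pos hE] at this
              calc (‖((L'.map (matOf d n)).prod) x j‖₊ : ℝ≥0∞) ≤ h ((j : ℤ) - (x : ℤ)) := this
                _ = h (((j : ℤ) - (i : ℤ)) - ((x : ℤ) - (i : ℤ))) := by congr 1; ring
          _ ≤ ∑' u : ℤ, symG d u * h (((j : ℤ) - (i : ℤ)) - u) := by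
              refine sum_comp_le_tsum (fun x : Fin n => (x : ℤ) - (i : ℤ)) ?_
              intro a b hab
              simp only [sub_left_inj] at hab
              exact Fin.ext (by exact_mod_cast hab)
      · rw [if_neg hE]
        refine le_trans hstep ?_
        have hsymG : ∀ u : ℤ, symG d (-u) = symG d u := by
          intro u; simp only [symG, neg_neg]; exact add_comm _ _
        calc (∑ x : Fin n, (‖matOf d n f i x‖₊ : ℝ≥0∞) *
              (‖((L'.map (matOf d n)).prod) x j‖₊ : ℝ≥0∞))
            ≤ ∑ x : Fin n, symG d ((i : ℤ) - (x : ℤ)) *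
                h (((i : ℤ) + (j : ℤ) - ((n : ℤ) - 1)) - ((i : ℤ) - (x : ℤ))) := by
              refine Finset.sum_le_sum fun x _ => ?_
              refine mul_le_mul' ?_ ?_
              · rw [show (i : ℤ) - (x : ℤ) = -((x : ℤ) - (i : ℤ)) by ring, hsymG]
                exact matOf_entry_le d hf n i x
              · have := hb n x j
                rw [if_neg hE] at this
                calc (‖((L'.map (matOf d n)).prod) x j‖₊ : ℝ≥0∞)
                    ≤ h ((x : ℤ) + (j : ℤ) - ((n : ℤ) - 1)) := this
                  _ = h (((i : ℤ) + (j : ℤ) - ((n : ℤ) - 1)) - ((i : ℤ) - (x : ℤ))) := by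
                      congr 1; ring
          _ ≤ ∑' u : ℤ, symG d u * h (((i : ℤ) + (j : ℤ) - ((n : ℤ) - 1)) - u) := by
              refine sum_comp_le_tsum (fun x : Fin n => (i : ℤ) - (x : ℤ)) ?_
              intro a b hab
              simp only [sub_right_inj] at hab
              exact Fin.ext (by exact_mod_cast hab)

lemma count_ofFn : ∀ {k : ℕ} (s : Fin k → Fin 3) (a : Fin 3),
    (List.ofFn s).count a = (Finset.univ.filter fun t => s t = a).card
  | 0, s, a => by simp
  | (k + 1), s, a => by
    rw [List.ofFn_succ, List.count_cons, count_ofFn (fun i => s i.succ) a,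
      Finset.card_filter, Finset.card_filter, Fin.sum_univ_succ]
    simp only [beq_iff_eq]
    omega

lemma traceBound (d : ℤ → ℂ) (hd : Summable fun k : ℤ => ‖d k‖) (L : List (Fin 3))
    (hodd : Odd (L.count 0)) :
    ∃ B : ℝ, ∀ n : ℕ, ‖Matrix.trace ((L.map (matOf d n)).prod)‖ ≤ B := by
  obtain ⟨h, hne, hb⟩ := entryBound d hd L
  refine ⟨(∑' x : ℤ, h x).toReal, fun n => ?_⟩
  have h1 : (‖Matrix.trace ((L.map (matOf d n)).prod)‖₊ : ℝ≥0∞) ≤ ∑' x : ℤ, h x := by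
    rw [Matrix.trace]
    refine le_trans (ENNReal.coe_le_coe.2 (nnnorm_sum_le Finset.univ
      (fun i => ((L.map (matOf d n)).prod).diag i))) ?_
    rw [ENNReal.coe_finset_sum]
    calc (∑ i : Fin n, (‖((L.map (matOf d n)).prod).diag i‖₊ : ℝ≥0∞))
        ≤ ∑ i : Fin n, h ((i : ℤ) + (i : ℤ) - ((n : ℤ) - 1)) := by
          refine Finset.sum_le_sum fun i _ => ?_
          have := hb n i i
          rwa [if_neg (Nat.not_even_iff_odd.2 hodd)] at this
      _ ≤ ∑' x : ℤ, h x := by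
          refine sum_comp_le_tsum (fun i : Fin n => (i : ℤ) + (i : ℤ) - ((n : ℤ) - 1)) ?_
          intro a b hab
          dsimp only at hab
          apply Fin.ext
          omega
  calc ‖Matrix.trace ((L.map (matOf d n)).prod)‖
      = ((‖Matrix.trace ((L.map (matOf d n)).prod)‖₊ : ℝ≥0∞)).toReal := by simp
    _ ≤ (∑' x : ℤ, h x).toReal := ENNReal.toReal_mono hne h1

lemma mainTendsto (d : ℤ → ℂ) (hd : Summable fun k : ℤ => ‖d k‖) (L : List (Fin 3))
    (hodd : Odd (L.count 0)) :
    Tendsto (fun n : ℕ => (n : ℂ)⁻¹ * Matrix.trace ((L.map (matOf d n)).prod))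
      atTop (nhds 0) := by
  obtain ⟨B, hB⟩ := traceBound d hd L hodd
  refine squeeze_zero_norm (a := fun n : ℕ => B / n) (fun n => ?_)
    (tendsto_const_div_atTop_nhds_zero_nat B)
  rw [norm_mul, norm_inv, Complex.norm_natCast]
  show _ ≤ B / (n : ℝ)
  rw [div_eq_inv_mul]
  exact mul_le_mul_of_nonneg_left (hB n) (by positivity)

/-- If a monomial in `Pₙ`, `Dₙ`, `Dₙ*` (factors encoded by `s t = 0, 1, 2`
respectively) contains an odd number of factors `Pₙ`, then `(1/n) Tr` of the
monomial tends to `0`; in particular `(1/n) Tr(Pₙ Dₙᵖ) → 0` for every `p`. -/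
theorem normalizedTrace_odd_P_monomial_tendsto_zero (d : ℤ → ℂ)
    (hd : Summable fun k : ℤ => ‖d k‖) :
    (∀ (k : ℕ) (s : Fin k → Fin 3),
        Odd (Finset.univ.filter fun t => s t = 0).card →
          Tendsto
            (fun n : ℕ =>
              (n : ℂ)⁻¹ *
                Matrix.trace
                  (List.ofFn fun t =>
                    if s t = 0 then bId n
                    else if s t = 1 then toep d n else (toep d n)ᴴ).prod)
            atTop (nhds 0)) ∧
      ∀ p : ℕ,
        Tendsto (fun n : ℕ => (n : ℂ)⁻¹ * Matrix.trace (bId n * toep d n ^ p))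
          atTop (nhds 0) := by
  have part1 : ∀ (k : ℕ) (s : Fin k → Fin 3),
      Odd (Finset.univ.filter fun t => s t = 0).card →
        Tendsto
          (fun n : ℕ =>
            (n : ℂ)⁻¹ *
              Matrix.trace
                (List.ofFn fun t =>
                  if s t = 0 then bId n
                  else if s t = 1 then toep d n else (toep d n)ᴴ).prod)
          atTop (nhds 0) := by
    intro k s hodd
    have hc : Odd ((List.ofFn s).count 0) := by
      rw [count_ofFn]; exact hodd
    refine (mainTendsto d hd (List.ofFn s) hc).congr fun n => ?_
    congr 2
    rw [List.map_ofFn]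
    rfl
  refine ⟨part1, fun p => ?_⟩
  set s : Fin (p + 1) → Fin 3 := fun t => if t = 0 then 0 else 1 with hs
  have hodd : Odd (Finset.univ.filter fun t => s t = 0).card := by
    have : (Finset.univ.filter fun t => s t = 0) = {0} := by
      ext t
      simp only [Finset.mem_filter, Finset.mem_univ, true_and, Finset.mem_singleton, hs]
      constructor
      · intro ht
        by_contra ht0
        rw [if_neg ht0] at ht
        exact absurd ht (by decide)
      · intro ht; subst ht; simp
    rw [this, Finset.card_singleton]
    exact odd_one
  refine (part1 (p + 1) s hodd).congr fun n => ?_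
  have head_eq : (if s 0 = 0 then bId n else if s 0 = 1 then toep d n else (toep d n)ᴴ)
      = bId n := by
    have h0 : s 0 = 0 := by simp [hs]
    rw [h0, if_pos rfl]
  have tail_eq : (List.ofFn fun i : Fin p =>
      if s i.succ = 0 then bId n else if s i.succ = 1 then toep d n else (toep d n)ᴴ)
      = List.replicate p (toep d n) := by
    rw [show (fun i : Fin p =>
        if s i.succ = 0 then bId n else if s i.succ = 1 then toep d n else (toep d n)ᴴ)
        = fun _ : Fin p => toep d n from funext fun i => by
      have h1 : s i.succ = 1 := by simp [hs, Fin.succ_ne_zero]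
      rw [h1, if_neg (by decide : ¬(1 : Fin 3) = 0), if_pos rfl]]
    exact List.ofFn_const p (toep d n)
  have hlist : (List.ofFn fun t : Fin (p + 1) =>
      if s t = 0 then bId n else if s t = 1 then toep d n else (toep d n)ᴴ)
      = bId n :: List.replicate p (toep d n) := by
    rw [List.ofFn_succ]
    exact congrArg₂ List.cons head_eq tail_eq
  rw [hlist, List.prod_cons, List.prod_replicate]
end

section
/- Let $(a_j)_{j\in\mathbb{Z}}$ be independent real random variables with mean zero, all moments uniformly bounded, and $T_n = ((a_{i-j}))$ the random Toeplitz matrix. For every $p \ge 1$, the normalized expected trace $\frac{1}{n^{1+p/2}}\mathbf{E}\,\mathrm{Tr}(T_n^p)$ is bounded uniformly in $n$: there is a constant $C_p$ (depending only on $p$ and the moment bounds) with $\big|\frac{1}{n^{1+p/2}}\mathbf{E}\,\mathrm{Tr}(T_n^p)\big| \le C_p$ for all $n$. -/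
open Matrix Filter MeasureTheory ProbabilityTheory

def pathW {n p : ℕ} (M : Matrix (Fin n) (Fin n) ℝ) (v : Fin (p+1) → Fin n) : ℝ :=
  ∏ k : Fin p, M (v k.castSucc) (v k.succ)

lemma pathW_cons {n p : ℕ} (M : Matrix (Fin n) (Fin n) ℝ) (x : Fin n)
    (v : Fin (p+1) → Fin n) :
    pathW M (Fin.cons x v) = M x (v 0) * pathW M v := by
  unfold pathW
  rw [Fin.prod_univ_succ]
  congr 1

lemma aux_pow_apply {n : ℕ} (M : Matrix (Fin n) (Fin n) ℝ) :
    ∀ (p : ℕ) (x y : Fin n), (M ^ (p+1)) x y =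
      ∑ g : Fin p → Fin n, pathW M (Fin.cons x (Fin.snoc g y)) := by
  intro p
  induction p with
  | zero =>
    intro x y
    rw [pow_one, Fintype.sum_unique]
    unfold pathW
    rw [Fin.prod_univ_one]
    have h1 : (Fin.cons x (Fin.snoc (default : Fin 0 → Fin n) y) : Fin 2 → Fin n)
        (Fin.castSucc 0) = x := rfl
    have h2 : (Fin.cons x (Fin.snoc (default : Fin 0 → Fin n) y) : Fin 2 → Fin n)
        (Fin.succ 0) = y := by
      rw [Fin.cons_succ, show (0 : Fin 1) = Fin.last 0 from rfl, Fin.snoc_last]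
    rw [h1, h2]
  | succ p ih =>
    intro x y
    have hpow : M ^ (p + 1 + 1) = M * M ^ (p + 1) := by
      rw [pow_succ']
    rw [hpow, Matrix.mul_apply]
    have h1 : ∀ z : Fin n, M x z * (M ^ (p+1)) z y
        = ∑ g : Fin p → Fin n, M x z * pathW M (Fin.cons z (Fin.snoc g y)) := by
      intro z; rw [ih z y, Finset.mul_sum]
    simp_rw [h1]
    rw [← Fintype.sum_prod_type']
    apply Fintype.sum_equiv (Fin.consEquiv (fun _ => Fin n))
    intro zg
    obtain ⟨z, g⟩ := zg
    show M x z * pathW M (Fin.cons z (Fin.snoc g y))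
      = pathW M (Fin.cons x (Fin.snoc (Fin.cons z g) y))
    have key : (Fin.snoc (Fin.cons z g) y : Fin (p+2) → Fin n)
        = Fin.cons z (Fin.snoc g y) := (Fin.cons_snoc_eq_snoc_cons z g y).symm
    rw [key, pathW_cons M x (Fin.cons z (Fin.snoc g y)), Fin.cons_zero]

lemma pathW_snoc_cycle {n p : ℕ} (M : Matrix (Fin n) (Fin n) ℝ) (i : Fin (p+1) → Fin n) :
    pathW M (Fin.snoc i (i 0)) = ∏ k : Fin (p+1), M (i k) (i (k+1)) := by
  unfold pathW
  apply Finset.prod_congr rfl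
  intro k _
  rw [Fin.snoc_castSucc]
  congr 1
  rcases eq_or_ne k (Fin.last p) with h | h
  · subst h
    rw [Fin.succ_last, Fin.snoc_last]
    congr 1
    apply Fin.ext
    simp [Fin.add_def]
  · have hlt : k.val < p := lt_of_le_of_ne (Fin.le_last k) (by simpa [Fin.ext_iff] using h)
    have hcast : k.succ = Fin.castSucc (k+1) := by
      apply Fin.ext
      simp only [Fin.val_succ, Fin.coe_castSucc, Fin.add_def, Fin.val_one']
      rw [Nat.mod_eq_of_lt (by omega : 1 < p + 1), Nat.mod_eq_of_lt (by omega)]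
    rw [hcast, Fin.snoc_castSucc]

lemma aux_trace_pow {n p : ℕ} (M : Matrix (Fin n) (Fin n) ℝ) :
    Matrix.trace (M ^ (p+1)) =
      ∑ i : Fin (p+1) → Fin n, ∏ k : Fin (p+1), M (i k) (i (k+1)) := by
  rw [Matrix.trace]
  simp only [Matrix.diag]
  have h1 : ∀ x : Fin n, (M ^ (p+1)) x x
      = ∑ g : Fin p → Fin n, pathW M (Fin.cons x (Fin.snoc g x)) :=
    fun x => aux_pow_apply M p x x
  simp_rw [h1]
  rw [← Fintype.sum_prod_type']
  apply Fintype.sum_equiv (Fin.consEquiv (fun _ => Fin n))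
  intro xg
  obtain ⟨x, g⟩ := xg
  simp only [Fin.consEquiv_apply]
  have key : (Fin.cons x (Fin.snoc g x) : Fin (p+2) → Fin n)
      = Fin.snoc (Fin.cons x g : Fin (p+1) → Fin n) ((Fin.cons x g : Fin (p+1) → Fin n) 0) := by
    rw [Fin.cons_zero, Fin.cons_snoc_eq_snoc_cons]
  rw [key, pathW_snoc_cycle]

lemma aux_indep_prod {Ω : Type*} [MeasurableSpace Ω] (μ : Measure Ω) [IsProbabilityMeasure μ]
    (b : ℤ → Ω → ℝ) (hind : iIndepFun b μ)
    (hbmeas : ∀ j, Measurable (b j)) (hbint : ∀ j, Integrable (b j) μ)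
    (S : Finset ℤ) :
    Integrable (fun ω => ∏ j ∈ S, b j ω) μ ∧
      ∫ ω, ∏ j ∈ S, b j ω ∂μ = ∏ j ∈ S, ∫ ω, b j ω ∂μ := by
  classical
  induction S using Finset.induction with
  | empty => simp
  | insert j S hjS ih =>
    have hdep : IndepFun (∏ k ∈ S, b k) (b j) μ :=
      hind.indepFun_finsetProd_of_notMem hbmeas hjS
    have hprod_eq : (fun ω => ∏ k ∈ S, b k ω) = ∏ k ∈ S, b k := by
      funext ω; simp [Finset.prod_apply]
    have hSint : Integrable (∏ k ∈ S, b k) μ := by rw [← hprod_eq]; exact ih.1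
    have hmul : Integrable (fun ω => (∏ k ∈ S, b k) ω * b j ω) μ :=
      hdep.integrable_mul hSint (hbint j)
    constructor
    · apply (hmul.congr ?_)
      filter_upwards with ω
      rw [Finset.prod_insert hjS]
      simp [Finset.prod_apply, mul_comm]
    · have := hdep.integral_mul_eq_mul_integral hSint.aestronglyMeasurable (hbint j).aestronglyMeasurable
      rw [Finset.prod_insert hjS]
      have h2 : ∫ ω, ∏ k ∈ insert j S, b k ω ∂μ = ∫ ω, (∏ k ∈ S, b k) ω * b j ω ∂μ := by
        apply integral_congr_ae; filter_upwards with ω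
        rw [Finset.prod_insert hjS]; simp [Finset.prod_apply, mul_comm]
      rw [h2]
      calc ∫ ω, (∏ k ∈ S, b k) ω * b j ω ∂μ
          = (∫ ω, (∏ k ∈ S, b k) ω ∂μ) * ∫ ω, b j ω ∂μ := this
        _ = (∫ ω, b j ω ∂μ) * ∏ k ∈ S, ∫ ω, b k ω ∂μ := by
            rw [← ih.2]; rw [mul_comm]; congr 1
            apply integral_congr_ae; filter_upwards with ω; simp [Finset.prod_apply]

lemma aux_count_d (p n : ℕ) :
    (((Fintype.piFinset fun _ : Fin p => Finset.Icc (-(n:ℤ)) (n:ℤ))).filter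
        (fun d => ∀ k, 2 ≤ (Finset.univ.filter fun k' => d k' = d k).card)).card
      ≤ p ^ p * (2 * n + 1) ^ (p / 2) := by
  classical
  set D := (((Fintype.piFinset fun _ : Fin p => Finset.Icc (-(n:ℤ)) (n:ℤ))).filter
        (fun d => ∀ k, 2 ≤ (Finset.univ.filter fun k' => d k' = d k).card)) with hD
  have hne : ∀ (d : Fin p → ℤ) (k : Fin p), (Finset.univ.filter fun m => d m = d k).Nonempty :=
    fun d k => ⟨k, by simp⟩
  set r : (Fin p → ℤ) → Fin p → Fin p :=
    fun d k => Finset.min' (Finset.univ.filter fun m => d m = d k) (hne d k) with hr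
  have hr_mem : ∀ (d : Fin p → ℤ) (k : Fin p), d (r d k) = d k := by
    intro d k
    have := Finset.min'_mem (Finset.univ.filter fun m => d m = d k) (hne d k)
    exact (Finset.mem_filter.mp this).2
  have hr_congr : ∀ (d : Fin p → ℤ) (k k' : Fin p), d k = d k' → r d k = r d k' := by
    intro d k k' h
    simp only [hr]
    congr 1
    ext m
    simp [h]
  have hr_idem : ∀ (d : Fin p → ℤ) (k : Fin p), r d (r d k) = r d k := fun d k => hr_congr d _ k (hr_mem d k)
  rw [Finset.card_eq_sum_card_fiberwise
    (f := fun d => r d) (t := (Finset.univ : Finset (Fin p → Fin p)))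
    (fun d _ => Finset.mem_univ _)]
  have hfiber : ∀ r0 : Fin p → Fin p,
      (D.filter fun d => r d = r0).card ≤ (2 * n + 1) ^ (p / 2) := by
    intro r0
    by_cases hne2 : (D.filter fun d => r d = r0).Nonempty
    swap
    · rw [Finset.not_nonempty_iff_eq_empty.mp hne2]
      simp
    obtain ⟨d0, hd0⟩ := hne2
    set F : Finset (Fin p) := Finset.image r0 Finset.univ with hF
    have hd0D : d0 ∈ D := (Finset.mem_filter.mp hd0).1
    have hr0 : r d0 = r0 := (Finset.mem_filter.mp hd0).2
    have hgood : ∀ k, 2 ≤ (Finset.univ.filter fun k' => d0 k' = d0 k).card :=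
      (Finset.mem_filter.mp hd0D).2
    have hFcard : F.card ≤ p / 2 := by
      have h1 : F.card ≤ (Finset.image d0 Finset.univ).card := by
        apply Finset.card_le_card_of_injOn d0
        · intro k _
          exact Finset.mem_image_of_mem _ (Finset.mem_univ _)
        · intro k1 h1 k2 h2 hd
          simp only [hF, ← hr0, Finset.coe_image, Set.mem_image] at h1 h2
          obtain ⟨m1, _, rfl⟩ := h1
          obtain ⟨m2, _, rfl⟩ := h2
          have := hr_congr d0 _ _ hd
          rwa [hr_idem, hr_idem] at this
      have h2 : 2 * (Finset.image d0 Finset.univ).card ≤ p := by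
        have hfw := Finset.card_eq_sum_card_fiberwise
          (f := d0) (s := Finset.univ) (t := Finset.image d0 Finset.univ)
          (fun k _ => Finset.mem_image_of_mem _ (Finset.mem_univ _))
        have hcard : (Finset.univ : Finset (Fin p)).card = p := by simp
        have hterm : ∀ v ∈ Finset.image d0 Finset.univ,
            2 ≤ (Finset.univ.filter fun k => d0 k = v).card := by
          intro v hv
          obtain ⟨k, _, rfl⟩ := Finset.mem_image.mp hv
          exact hgood k
        calc 2 * (Finset.image d0 Finset.univ).card
            = ∑ _v ∈ Finset.image d0 Finset.univ, 2 := by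
              rw [Finset.sum_const, smul_eq_mul, mul_comm]
          _ ≤ ∑ v ∈ Finset.image d0 Finset.univ,
                (Finset.univ.filter fun k => d0 k = v).card :=
              Finset.sum_le_sum hterm
          _ = p := by rw [← hfw, hcard]
      omega
    have hinj : (D.filter fun d => r d = r0).card
        ≤ (Fintype.piFinset fun _ : ↥F => Finset.Icc (-(n:ℤ)) (n:ℤ)).card := by
      apply Finset.card_le_card_of_injOn (fun d => fun x : ↥F => d x)
      · intro d hd
        rw [Finset.mem_coe, Fintype.mem_piFinset]
        intro x
        have hdD : d ∈ D := (Finset.mem_filter.mp hd).1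
        have hpi := (Finset.mem_filter.mp hdD).1
        exact (Fintype.mem_piFinset.mp hpi) x
      · intro d1 h1 d2 h2 heq
        simp only [Finset.coe_filter, Set.mem_setOf_eq] at h1 h2
        have hr1 : r d1 = r0 := h1.2
        have hr2 : r d2 = r0 := h2.2
        funext k
        have hk : r0 k ∈ F := Finset.mem_image_of_mem _ (Finset.mem_univ _)
        have e1 : d1 k = d1 (r0 k) := by rw [← hr1]; exact (hr_mem d1 k).symm
        have e2 : d2 k = d2 (r0 k) := by rw [← hr2]; exact (hr_mem d2 k).symm
        have e3 : d1 (r0 k) = d2 (r0 k) := congrFun heq ⟨r0 k, hk⟩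
        rw [e1, e3, ← e2]
    refine hinj.trans ?_
    rw [Fintype.card_piFinset]
    have hIcc : (Finset.Icc (-(n:ℤ)) (n:ℤ)).card = 2 * n + 1 := by
      rw [Int.card_Icc]
      omega
    rw [Finset.prod_const, hIcc, Finset.card_univ, Fintype.card_coe]
    exact Nat.pow_le_pow_right (by omega) hFcard
  calc ∑ r0 : Fin p → Fin p, (D.filter fun d => r d = r0).card
      ≤ ∑ _r0 : Fin p → Fin p, (2 * n + 1) ^ (p / 2) :=
        Finset.sum_le_sum (fun r0 _ => hfiber r0)
    _ = p ^ p * (2 * n + 1) ^ (p / 2) := by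
        rw [Finset.sum_const, smul_eq_mul, Finset.card_univ, Fintype.card_fun,
          Fintype.card_fin]

lemma aux_count_i (p' n : ℕ) :
    ((Finset.univ : Finset (Fin (p'+1) → Fin n)).filter (fun i =>
        ∀ k, 2 ≤ (Finset.univ.filter fun k' =>
          ((i k' : ℤ) - (i (k'+1) : ℤ)) = ((i k : ℤ) - (i (k+1) : ℤ))).card)).card
      ≤ n * ((p'+1) ^ (p'+1) * (2 * n + 1) ^ ((p'+1) / 2)) := by
  classical
  set p := p' + 1 with hp
  set dd : (Fin p → Fin n) → Fin p → ℤ :=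
    fun i k => ((i k : ℤ) - (i (k+1) : ℤ)) with hdd
  set D := (((Fintype.piFinset fun _ : Fin p => Finset.Icc (-(n:ℤ)) (n:ℤ))).filter
        (fun d => ∀ k, 2 ≤ (Finset.univ.filter fun k' => d k' = d k).card)) with hD
  have h1 : ((Finset.univ : Finset (Fin p → Fin n)).filter (fun i =>
        ∀ k, 2 ≤ (Finset.univ.filter fun k' => dd i k' = dd i k).card)).card
      ≤ ((Finset.univ : Finset (Fin n)) ×ˢ D).card := by
    apply Finset.card_le_card_of_injOn (fun i => (i 0, dd i))
    · intro i hi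
      rw [Finset.mem_coe, Finset.mem_product]
      refine ⟨Finset.mem_univ _, ?_⟩
      rw [hD, Finset.mem_filter]
      constructor
      · rw [Fintype.mem_piFinset]
        intro k
        rw [Finset.mem_Icc]
        have h1 := (i k).isLt
        have h2 := (i (k+1)).isLt
        simp only [hdd]
        omega
      · exact (Finset.mem_filter.mp hi).2
    · intro i1 hi1 i2 hi2 heq
      simp only [Prod.mk.injEq] at heq
      obtain ⟨h0, hd⟩ := heq
      have key : ∀ m (hm : m < p), i1 ⟨m, hm⟩ = i2 ⟨m, hm⟩ := by
        intro m
        induction m with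
        | zero =>
          intro hm
          have h00 : (⟨0, hm⟩ : Fin p) = 0 := rfl
          rw [h00]
          exact h0
        | succ m ih =>
          intro hm
          have hm' : m < p := by omega
          have hstep := congrFun hd ⟨m, hm'⟩
          have hsucc : (⟨m, hm'⟩ : Fin p) + 1 = ⟨m+1, hm⟩ := by
            apply Fin.ext
            simp only [Fin.add_def, Fin.val_one']
            rw [Nat.mod_eq_of_lt (by omega : 1 < p)]
            exact Nat.mod_eq_of_lt hm
          simp only [hdd, hsucc] at hstep
          have hbase : ((i1 ⟨m, hm'⟩ : ℕ) : ℤ) = ((i2 ⟨m, hm'⟩ : ℕ) : ℤ) := by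
            exact_mod_cast congrArg (fun x : Fin n => ((x : ℕ) : ℤ)) (ih hm')
          have : ((i1 ⟨m+1, hm⟩ : ℕ) : ℤ) = ((i2 ⟨m+1, hm⟩ : ℕ) : ℤ) := by omega
          exact Fin.ext (by exact_mod_cast this)
      funext k
      have := key k.val k.isLt
      simpa [Fin.eta] using this
  refine h1.trans ?_
  rw [Finset.card_product, Finset.card_univ, Fintype.card_fin]
  exact Nat.mul_le_mul_left n (aux_count_d p n)

/-- Uniform bound for the normalized expected trace of powers of the random Toeplitz
matrix: if `(a_j)_{j ∈ ℤ}` are independent real random variables with mean zero and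
uniformly bounded moments of all orders, and `Tₙ(i,j) = a_{i-j}`, then for every
`p ≥ 1` there is a constant `C_p` with
`n^{-(1+p/2)} |E[Tr(Tₙᵖ)]| ≤ C_p` for all `n`. -/
theorem normalized_expected_trace_toeplitz_bounded
    {Ω : Type*} [MeasurableSpace Ω] (μ : Measure Ω) [IsProbabilityMeasure μ]
    (a : ℤ → Ω → ℝ)
    (hmeas : ∀ j, Measurable (a j))
    (hindep : iIndepFun a μ)
    (hmean : ∀ j, ∫ ω, a j ω ∂μ = 0)
    (hint : ∀ j k, Integrable (fun ω => |a j ω| ^ k) μ)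
    (hmom : ∀ k : ℕ, ∃ c : ℝ, ∀ j, ∫ ω, |a j ω| ^ k ∂μ ≤ c)
    (p : ℕ) (hp : 1 ≤ p) :
    ∃ C : ℝ, ∀ n : ℕ,
      ((n : ℝ) ^ ((1 : ℝ) + (p : ℝ) / 2))⁻¹ *
          |∫ ω, Matrix.trace
            ((Matrix.of fun i j : Fin n => a ((i : ℤ) - (j : ℤ)) ω) ^ p) ∂μ| ≤ C := by
  obtain ⟨p', rfl⟩ : ∃ p', p = p' + 1 := ⟨p - 1, by omega⟩
  choose cb hcb using hmom
  set M : ℝ := 1 + ∑ k ∈ Finset.range (p'+2), |cb k| with hMdef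
  have hsum_nonneg : (0:ℝ) ≤ ∑ k ∈ Finset.range (p'+2), |cb k| :=
    Finset.sum_nonneg fun k _ => abs_nonneg _
  have hM1 : (1:ℝ) ≤ M := by rw [hMdef]; linarith
  have hMk : ∀ (j : ℤ) (m : ℕ), m ≤ p'+1 → |∫ ω, a j ω ^ m ∂μ| ≤ M := by
    intro j m hm
    have h1 : |∫ ω, a j ω ^ m ∂μ| ≤ ∫ ω, |a j ω ^ m| ∂μ := by
      have := norm_integral_le_integral_norm (μ := μ) (f := fun ω => a j ω ^ m)
      simpa [Real.norm_eq_abs] using this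
    have h2 : ∫ ω, |a j ω ^ m| ∂μ = ∫ ω, |a j ω| ^ m ∂μ := by
      congr 1; funext ω; rw [abs_pow]
    have h3 : cb m ≤ M := by
      have hmem : m ∈ Finset.range (p'+2) := Finset.mem_range.mpr (by omega)
      have h5 := Finset.single_le_sum (f := fun k => |cb k|) (fun k _ => abs_nonneg _) hmem
      have h4 : cb m ≤ |cb m| := le_abs_self _
      rw [hMdef]; linarith
    calc |∫ ω, a j ω ^ m ∂μ| ≤ ∫ ω, |a j ω ^ m| ∂μ := h1
      _ = ∫ ω, |a j ω| ^ m ∂μ := h2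
      _ ≤ cb m := hcb m j
      _ ≤ M := h3
  refine ⟨3^(p'+1) * ((p'+1 : ℕ):ℝ)^(p'+1) * M^(p'+1), ?_⟩
  intro n
  -- local notation
  have hbmeas : ∀ (mm : ℤ → ℕ) (j : ℤ), Measurable (fun ω => a j ω ^ mm j) :=
    fun mm j => (hmeas j).pow_const _
  have hbint : ∀ (mm : ℤ → ℕ) (j : ℤ), Integrable (fun ω => a j ω ^ mm j) μ := by
    intro mm j
    apply (hint j (mm j)).mono ((hbmeas mm j).aestronglyMeasurable)
    filter_upwards with ω
    simp [Real.norm_eq_abs, abs_pow]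
  have hbindep : ∀ (mm : ℤ → ℕ),
      iIndepFun (fun j ω => a j ω ^ mm j) μ :=
    fun mm => hindep.comp (fun j x => x ^ mm j) (fun j => measurable_id.pow_const _)
  set dd : (Fin (p'+1) → Fin n) → Fin (p'+1) → ℤ :=
    fun i k => ((i k : ℤ) - (i (k+1) : ℤ)) with hdd
  set mlt : (Fin (p'+1) → Fin n) → ℤ → ℕ :=
    fun i j => (Finset.univ.filter fun k => dd i k = j).card with hmlt
  have hkey := fun (i : Fin (p'+1) → Fin n) =>
    aux_indep_prod μ (fun j ω => a j ω ^ mlt i j) (hbindep (mlt i)) (hbmeas (mlt i))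
      (hbint (mlt i)) (Finset.image (dd i) Finset.univ)
  have hprod_eq : ∀ (i : Fin (p'+1) → Fin n) (ω : Ω),
      (∏ k : Fin (p'+1), a (dd i k) ω)
        = ∏ j ∈ Finset.image (dd i) Finset.univ, a j ω ^ mlt i j := by
    intro i ω
    exact Finset.prod_comp (fun j => a j ω) (dd i)
  have hint_i : ∀ i : Fin (p'+1) → Fin n,
      Integrable (fun ω => ∏ k : Fin (p'+1), a (dd i k) ω) μ := by
    intro i
    apply ((hkey i).1).congr
    filter_upwards with ω
    exact (hprod_eq i ω).symm
  set term : (Fin (p'+1) → Fin n) → ℝ :=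
    fun i => ∫ ω, ∏ k : Fin (p'+1), a (dd i k) ω ∂μ with hterm
  have hterm_eq : ∀ i, term i
      = ∏ j ∈ Finset.image (dd i) Finset.univ, ∫ ω, a j ω ^ mlt i j ∂μ := by
    intro i
    rw [hterm]
    simp only
    rw [integral_congr_ae (Filter.Eventually.of_forall (hprod_eq i))]
    exact (hkey i).2
  have hswap : ∫ ω, Matrix.trace
        ((Matrix.of fun i j : Fin n => a ((i : ℤ) - (j : ℤ)) ω) ^ (p'+1)) ∂μ
      = ∑ i : Fin (p'+1) → Fin n, term i := by
    have hpt : ∀ ω : Ω, Matrix.trace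
          ((Matrix.of fun i j : Fin n => a ((i : ℤ) - (j : ℤ)) ω) ^ (p'+1))
        = ∑ i : Fin (p'+1) → Fin n, ∏ k : Fin (p'+1), a (dd i k) ω := by
      intro ω
      rw [aux_trace_pow]
      rfl
    rw [integral_congr_ae (Filter.Eventually.of_forall hpt)]
    exact integral_finset_sum _ (fun i _ => hint_i i)
  have hzero : ∀ i : Fin (p'+1) → Fin n,
      ¬ (∀ k, 2 ≤ (Finset.univ.filter fun k' => dd i k' = dd i k).card) → term i = 0 := by
    intro i hgi
    push_neg at hgi
    obtain ⟨k, hk⟩ := hgi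
    have hmem : dd i k ∈ Finset.image (dd i) Finset.univ :=
      Finset.mem_image_of_mem _ (Finset.mem_univ k)
    rw [hterm_eq i]
    apply Finset.prod_eq_zero hmem
    have h1le : 1 ≤ mlt i (dd i k) := by
      rw [hmlt]
      exact Finset.card_pos.mpr ⟨k, by simp⟩
    have hm1 : mlt i (dd i k) = 1 := by
      rw [hmlt] at h1le ⊢
      simp only at hk h1le ⊢
      omega
    rw [hm1]
    simp only [pow_one]
    exact hmean _
  have hbound : ∀ i : Fin (p'+1) → Fin n, |term i| ≤ M^(p'+1) := by
    intro i
    rw [hterm_eq i]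
    have hcard_im : (Finset.image (dd i) Finset.univ).card ≤ p'+1 := by
      apply Finset.card_image_le.trans
      simp
    calc |∏ j ∈ Finset.image (dd i) Finset.univ, ∫ ω, a j ω ^ mlt i j ∂μ|
        = ∏ j ∈ Finset.image (dd i) Finset.univ, |∫ ω, a j ω ^ mlt i j ∂μ| :=
          Finset.abs_prod _ _
      _ ≤ ∏ _j ∈ Finset.image (dd i) Finset.univ, M := by
          apply Finset.prod_le_prod (fun j _ => abs_nonneg _)
          intro j _
          apply hMk j (mlt i j)
          rw [hmlt]
          exact (Finset.card_filter_le _ _).trans (by simp)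
      _ = M ^ (Finset.image (dd i) Finset.univ).card := Finset.prod_const M
      _ ≤ M ^ (p'+1) := pow_le_pow_right₀ hM1 hcard_im
  rw [hswap]
  rcases Nat.eq_zero_or_pos n with hn0 | hn
  · subst hn0
    have he : ((1 : ℝ) + ((p'+1 : ℕ) : ℝ) / 2) ≠ 0 := by positivity
    rw [Nat.cast_zero, Real.zero_rpow he, _root_.inv_zero, zero_mul]
    positivity
  have hn1 : (1:ℝ) ≤ (n:ℝ) := by exact_mod_cast hn
  set P : (Fin (p'+1) → Fin n) → Prop := fun i =>
    ∀ k, 2 ≤ (Finset.univ.filter fun k' => dd i k' = dd i k).card with hP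
  have hsum1 : |∑ i : Fin (p'+1) → Fin n, term i|
      ≤ ((Finset.univ.filter P).card : ℝ) * M^(p'+1) := by
    classical
    calc |∑ i : Fin (p'+1) → Fin n, term i|
        ≤ ∑ i : Fin (p'+1) → Fin n, |term i| := Finset.abs_sum_le_sum_abs _ _
      _ = (∑ i ∈ Finset.univ.filter P, |term i|)
          + ∑ i ∈ Finset.univ.filter (fun i => ¬ P i), |term i| :=
          (Finset.sum_filter_add_sum_filter_not _ _ _).symm
      _ = ∑ i ∈ Finset.univ.filter P, |term i| := by
          rw [Finset.sum_eq_zero (s := Finset.univ.filter (fun i => ¬ P i)), add_zero]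
          intro i hi
          rw [hzero i ((Finset.mem_filter.mp hi).2), abs_zero]
      _ ≤ ((Finset.univ.filter P).card) • M^(p'+1) :=
          Finset.sum_le_card_nsmul _ _ _ (fun i _ => hbound i)
      _ = ((Finset.univ.filter P).card : ℝ) * M^(p'+1) := nsmul_eq_mul _ _
  have hcount : ((Finset.univ.filter P).card : ℝ)
      ≤ (n:ℝ) * (((p'+1 : ℕ):ℝ)^(p'+1) * (2*(n:ℝ)+1)^((p'+1)/2)) := by
    have h := aux_count_i p' n
    have h2 : ((Finset.univ.filter P).card : ℝ)
        ≤ ((n * ((p'+1) ^ (p'+1) * (2 * n + 1) ^ ((p'+1) / 2)) : ℕ) : ℝ) :=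
      Nat.cast_le.mpr h
    refine h2.trans (le_of_eq ?_)
    push_cast
    ring
  set q : ℕ := (p'+1)/2 with hqdef
  have hq : q ≤ p'+1 := Nat.div_le_self _ _
  have hqr : ((q : ℕ) : ℝ) ≤ ((p'+1 : ℕ) : ℝ)/2 := Nat.cast_div_le
  have hA : (2*(n:ℝ)+1)^q ≤ 3^(p'+1) * (n:ℝ)^q := by
    calc (2*(n:ℝ)+1)^q ≤ (3*(n:ℝ))^q :=
          pow_le_pow_left₀ (by positivity) (by linarith) q
      _ = 3^q * (n:ℝ)^q := mul_pow _ _ _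
      _ ≤ 3^(p'+1) * (n:ℝ)^q :=
          mul_le_mul_of_nonneg_right (pow_le_pow_right₀ (by norm_num) hq) (by positivity)
  have hB : (n:ℝ) * (n:ℝ)^q ≤ (n:ℝ)^((1:ℝ) + ((p'+1:ℕ):ℝ)/2) := by
    have h1 : (n:ℝ) * (n:ℝ)^q = (n:ℝ)^(q+1) := (pow_succ' _ _).symm
    rw [h1, ← Real.rpow_natCast (n:ℝ) (q+1)]
    apply Real.rpow_le_rpow_of_exponent_le hn1
    push_cast
    push_cast at hqr
    linarith [hqr]
  have hC : (n:ℝ) * (((p'+1:ℕ):ℝ)^(p'+1) * (2*(n:ℝ)+1)^q)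
      ≤ (n:ℝ)^((1:ℝ) + ((p'+1:ℕ):ℝ)/2) * (3^(p'+1) * ((p'+1:ℕ):ℝ)^(p'+1)) := by
    calc (n:ℝ) * (((p'+1:ℕ):ℝ)^(p'+1) * (2*(n:ℝ)+1)^q)
        = ((n:ℝ) * (2*(n:ℝ)+1)^q) * ((p'+1:ℕ):ℝ)^(p'+1) := by ring
      _ ≤ ((n:ℝ) * (3^(p'+1) * (n:ℝ)^q)) * ((p'+1:ℕ):ℝ)^(p'+1) := by
          apply mul_le_mul_of_nonneg_right _ (by positivity)
          exact mul_le_mul_of_nonneg_left hA (by positivity)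
      _ = ((n:ℝ) * (n:ℝ)^q) * (3^(p'+1) * ((p'+1:ℕ):ℝ)^(p'+1)) := by ring
      _ ≤ (n:ℝ)^((1:ℝ) + ((p'+1:ℕ):ℝ)/2) * (3^(p'+1) * ((p'+1:ℕ):ℝ)^(p'+1)) :=
          mul_le_mul_of_nonneg_right hB (by positivity)
  have hpos : (0:ℝ) < (n:ℝ)^((1:ℝ) + ((p'+1:ℕ):ℝ)/2) :=
    Real.rpow_pos_of_pos (by linarith) _
  have hfin : |∑ i : Fin (p'+1) → Fin n, term i|
      ≤ (n:ℝ)^((1:ℝ) + ((p'+1:ℕ):ℝ)/2)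
        * (3^(p'+1) * ((p'+1:ℕ):ℝ)^(p'+1)) * M^(p'+1) := by
    calc |∑ i : Fin (p'+1) → Fin n, term i|
        ≤ ((Finset.univ.filter P).card : ℝ) * M^(p'+1) := hsum1
      _ ≤ ((n:ℝ) * (((p'+1 : ℕ):ℝ)^(p'+1) * (2*(n:ℝ)+1)^q)) * M^(p'+1) :=
          mul_le_mul_of_nonneg_right hcount (by positivity)
      _ ≤ ((n:ℝ)^((1:ℝ) + ((p'+1:ℕ):ℝ)/2)
            * (3^(p'+1) * ((p'+1:ℕ):ℝ)^(p'+1))) * M^(p'+1) :=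
          mul_le_mul_of_nonneg_right hC (by positivity)
  calc ((n:ℝ)^((1:ℝ) + ((p'+1:ℕ):ℝ)/2))⁻¹ * |∑ i : Fin (p'+1) → Fin n, term i|
      ≤ ((n:ℝ)^((1:ℝ) + ((p'+1:ℕ):ℝ)/2))⁻¹
        * ((n:ℝ)^((1:ℝ) + ((p'+1:ℕ):ℝ)/2)
          * (3^(p'+1) * ((p'+1:ℕ):ℝ)^(p'+1)) * M^(p'+1)) :=
        mul_le_mul_of_nonneg_left hfin (inv_nonneg.mpr hpos.le)
    _ = 3^(p'+1) * ((p'+1 : ℕ):ℝ)^(p'+1) * M^(p'+1) := by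
        rw [show ((n:ℝ)^((1:ℝ) + ((p'+1:ℕ):ℝ)/2))⁻¹
            * ((n:ℝ)^((1:ℝ) + ((p'+1:ℕ):ℝ)/2)
              * (3^(p'+1) * ((p'+1:ℕ):ℝ)^(p'+1)) * M^(p'+1))
          = (((n:ℝ)^((1:ℝ) + ((p'+1:ℕ):ℝ)/2))⁻¹ * (n:ℝ)^((1:ℝ) + ((p'+1:ℕ):ℝ)/2))
            * (3^(p'+1) * ((p'+1:ℕ):ℝ)^(p'+1) * M^(p'+1)) from by ring,
          inv_mul_cancel₀ hpos.ne', one_mul]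
end
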